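/- arXiv:0711.1740 — 16 statements merged into one kernel-verified Lean document; each statement's English description precedes it below -/
import Mathlib

section
/- Let {P_n}_{n≥0} be a sequence of monic real polynomials with P_0 = 1, P_1(x) = x − β_0 and x·P_n(x) = P_{n+1}(x) + β_n·P_n(x) + γ_n·P_{n−1}(x) for all n ≥ 1, with γ_n ≠ 0 for all n ≥ 1. Let k ≥ 1, let a_1,…,a_k be real numbers with a_k ≠ 0, and let {Q_n}_{n≥0} be monic polynomials with deg Q_n = n such that Q_n = P_n + a_1·P_{n−1} + … + a_k·P_{n−k} for all n ≥ k+1. If {Q_n} satisfies a three-term recurrence x·Q_n(x) = Q_{n+1}(x) + β̃_n·Q_n(x) + γ̃_n·Q_{n−1}(x) for all n ≥ 1 with γ̃_n ≠ 0, then for every n ≥ k+2: γ_n + a_1·(β_{n−1} − β_n) = γ_{n−k}, and a_{j−1}·(γ_{n−k} − γ_{n−j+1}) = a_j·(β_{n−j} − β_n) for every j with 2 ≤ j ≤ k. -/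
open Polynomial Finset

/-- Coefficients of the expansion of `Q` in the `P` basis, with boundary conventions. -/
def bfun (k : ℕ) (a : ℕ → ℝ) : ℕ → ℝ := fun j => if j = 0 then 1 else if j ≤ k then a j else 0

/-- Family of monic polynomials with `natDegree (P i) = i` is "linearly independent":
from a vanishing combination with descending indices all coefficients vanish. -/
lemma aux_linind (P : ℕ → Polynomial ℝ) (hmon : ∀ i, (P i).Monic)
    (hdeg : ∀ i, (P i).natDegree = i) (c : ℕ → ℝ) (M n : ℕ) (hn : M ≤ n + 1)
    (h : ∑ m ∈ Finset.range M, C (c m) * P (n - m) = 0) :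
    ∀ m, m < M → c m = 0 := by
  intro m
  induction m using Nat.strong_induction_on with
  | _ m IH =>
    intro hm
    have hco := congrArg (fun p => Polynomial.coeff p (n - m)) h
    simp only [Polynomial.finset_sum_coeff, Polynomial.coeff_C_mul,
      Polynomial.coeff_zero] at hco
    rw [Finset.sum_eq_single m] at hco
    · have h1 : (P (n - m)).coeff (n - m) = 1 := by
        have := (hmon (n - m)).coeff_natDegree
        rwa [hdeg] at this
      rw [h1, mul_one] at hco
      exact hco
    · intro i hi hne
      rcases lt_or_gt_of_ne hne with hlt | hgt
      · rw [IH i hlt (lt_trans hlt hm)]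
        ring
      · have hiM : i < M := Finset.mem_range.mp hi
        have hz : (P (n - i)).coeff (n - m) = 0 := by
          apply Polynomial.coeff_eq_zero_of_natDegree_lt
          rw [hdeg]
          omega
        rw [hz, mul_zero]
    · intro hmem
      exact absurd (Finset.mem_range.mpr hm) hmem

theorem stmt_0 (P Q : ℕ → Polynomial ℝ) (β γ βt γt : ℕ → ℝ) (k : ℕ) (a : ℕ → ℝ)
    (hk : 1 ≤ k) (hak : a k ≠ 0)
    (hPmonic : ∀ n, (P n).Monic)
    (hP0 : P 0 = 1) (hP1 : P 1 = X - C (β 0))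
    (hPrec : ∀ n, 1 ≤ n → X * P n = P (n + 1) + C (β n) * P n + C (γ n) * P (n - 1))
    (hγ : ∀ n, 1 ≤ n → γ n ≠ 0)
    (hQmonic : ∀ n, (Q n).Monic) (hQdeg : ∀ n, (Q n).natDegree = n)
    (hQ : ∀ n, k + 1 ≤ n → Q n = P n + ∑ j ∈ Finset.Icc 1 k, C (a j) * P (n - j))
    (hQrec : ∀ n, 1 ≤ n → X * Q n = Q (n + 1) + C (βt n) * Q n + C (γt n) * Q (n - 1))
    (hγt : ∀ n, 1 ≤ n → γt n ≠ 0) :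
    ∀ n, k + 2 ≤ n →
      γ n + a 1 * (β (n - 1) - β n) = γ (n - k) ∧
      ∀ j, 2 ≤ j → j ≤ k →
        a (j - 1) * (γ (n - k) - γ (n - j + 1)) = a j * (β (n - j) - β n) := by
  set b : ℕ → ℝ := bfun k a with hbdef
  have hb0 : b 0 = 1 := by simp [hbdef, bfun]
  have hbj : ∀ j, 1 ≤ j → j ≤ k → b j = a j := by
    intro j h1 h2
    simp [hbdef, bfun, h2]
    omega
  have hbtop : b (k + 1) = 0 := by
    simp [hbdef, bfun]
  -- degrees of P
  have hdeg : ∀ i, (P i).natDegree = i := by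
    intro i
    induction i using Nat.strong_induction_on with
    | _ i IH =>
      match i with
      | 0 => simp [hP0]
      | 1 => rw [hP1]; exact natDegree_X_sub_C _
      | (m + 2) =>
        have h1 : (P (m + 1)).natDegree = m + 1 := IH _ (by omega)
        have h0 : (P m).natDegree = m := IH _ (by omega)
        have hr := hPrec (m + 1) (by omega)
        have hsub : m + 1 - 1 = m := by omega
        rw [hsub] at hr
        have hPm2 : P (m + 2) =
            X * P (m + 1) - (C (β (m + 1)) * P (m + 1) + C (γ (m + 1)) * P m) := by
          linear_combination -hr
        have hXP : (X * P (m + 1)).natDegree = m + 2 := by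
          rw [(monic_X (R := ℝ)).natDegree_mul (hPmonic (m + 1))]
          simp [h1]
          omega
        have hlt : (C (β (m + 1)) * P (m + 1) + C (γ (m + 1)) * P m).natDegree
            < (X * P (m + 1)).natDegree := by
          rw [hXP]
          refine lt_of_le_of_lt (natDegree_add_le _ _) ?_
          have e1 := natDegree_C_mul_le (β (m + 1)) (P (m + 1))
          have e2 := natDegree_C_mul_le (γ (m + 1)) (P m)
          rw [h1] at e1; rw [h0] at e2
          omega
        rw [hPm2, natDegree_sub_eq_left_of_natDegree_lt hlt, hXP]
  -- expansion of Q in the P basis with the b coefficients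
  have hQb : ∀ m, k + 1 ≤ m → Q m = ∑ j ∈ Finset.range (k + 1), C (b j) * P (m - j) := by
    intro m hm
    rw [hQ m hm, Finset.sum_range_succ']
    have h1 : ∑ j ∈ Finset.Icc 1 k, C (a j) * P (m - j)
        = ∑ i ∈ Finset.range k, C (b (i + 1)) * P (m - (i + 1)) := by
      rw [← Finset.Ico_add_one_right_eq_Icc, Finset.sum_Ico_eq_sum_range]
      have hkk : k + 1 - 1 = k := by omega
      rw [hkk]
      apply Finset.sum_congr rfl
      intro i hi
      have hik : i < k := Finset.mem_range.mp hi
      rw [hbj (i + 1) (by omega) (by omega)]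
      have : 1 + i = i + 1 := by omega
      rw [this]
    rw [h1, hb0]
    simp [add_comm]
  intro n hn
  -- the vanishing linear combination
  set c : ℕ → ℝ := fun m =>
    b m * (β (n - m) - βt n) + (if m = 0 then 0 else b (m - 1) * (γ (n - m + 1) - γt n))
    with hcdef
  have hsum : ∑ m ∈ Finset.range (k + 2), C (c m) * P (n - m) = 0 := by
    have key : ∀ j ∈ Finset.range (k + 1),
        C (b j * (β (n - j) - βt n)) * P (n - j)
          + C (b j * (γ (n - j) - γt n)) * P (n - j - 1)
        = C (b j) * (X * P (n - j))
          - (C (b j) * P (n + 1 - j) + C (βt n) * (C (b j) * P (n - j))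
            + C (γt n) * (C (b j) * P (n - 1 - j))) := by
      intro j hj
      have hjk : j < k + 1 := Finset.mem_range.mp hj
      rw [hPrec (n - j) (by omega)]
      have e1 : n - j + 1 = n + 1 - j := by omega
      have e2 : n - 1 - j = n - j - 1 := by omega
      rw [e1, e2, map_mul, map_mul, map_sub, map_sub]
      ring
    -- split the target sum
    have split1 : ∑ m ∈ Finset.range (k + 2), C (c m) * P (n - m)
        = (∑ m ∈ Finset.range (k + 2), C (b m * (β (n - m) - βt n)) * P (n - m))
          + ∑ m ∈ Finset.range (k + 2),
              C (if m = 0 then 0 else b (m - 1) * (γ (n - m + 1) - γt n)) * P (n - m) := by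
      rw [← Finset.sum_add_distrib]
      apply Finset.sum_congr rfl
      intro m _
      rw [hcdef]
      rw [map_add]
      ring
    have part1 : ∑ m ∈ Finset.range (k + 2), C (b m * (β (n - m) - βt n)) * P (n - m)
        = ∑ j ∈ Finset.range (k + 1), C (b j * (β (n - j) - βt n)) * P (n - j) := by
      rw [Finset.sum_range_succ, hbtop]
      simp
    have part2 : (∑ m ∈ Finset.range (k + 2),
          C (if m = 0 then 0 else b (m - 1) * (γ (n - m + 1) - γt n)) * P (n - m))
        = ∑ j ∈ Finset.range (k + 1), C (b j * (γ (n - j) - γt n)) * P (n - j - 1) := by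
      rw [Finset.sum_range_succ']
      have hz : C (if (0:ℕ) = 0 then (0:ℝ) else b (0 - 1) * (γ (n - 0 + 1) - γt n)) * P (n - 0)
          = 0 := by norm_num
      rw [hz, add_zero]
      apply Finset.sum_congr rfl
      intro j hj
      have hjk : j < k + 1 := Finset.mem_range.mp hj
      have e1 : j + 1 - 1 = j := by omega
      have e2 : n - (j + 1) + 1 = n - j := by omega
      have e3 : n - (j + 1) = n - j - 1 := by omega
      rw [if_neg (by omega), e1, e2, e3]
    rw [split1, part1, part2, ← Finset.sum_add_distrib, Finset.sum_congr rfl key,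
      Finset.sum_sub_distrib]
    have e := hQrec n (by omega)
    rw [hQb n (by omega), hQb (n + 1) (by omega), hQb (n - 1) (by omega)] at e
    have eL : ∑ j ∈ Finset.range (k + 1), C (b j) * (X * P (n - j))
        = X * ∑ j ∈ Finset.range (k + 1), C (b j) * P (n - j) := by
      rw [Finset.mul_sum]
      apply Finset.sum_congr rfl
      intro j _
      ring
    have eR : ∑ j ∈ Finset.range (k + 1),
          (C (b j) * P (n + 1 - j) + C (βt n) * (C (b j) * P (n - j))
            + C (γt n) * (C (b j) * P (n - 1 - j)))
        = (∑ j ∈ Finset.range (k + 1), C (b j) * P (n + 1 - j))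
          + C (βt n) * (∑ j ∈ Finset.range (k + 1), C (b j) * P (n - j))
          + C (γt n) * ∑ j ∈ Finset.range (k + 1), C (b j) * P (n - 1 - j) := by
      rw [Finset.mul_sum, Finset.mul_sum, ← Finset.sum_add_distrib, ← Finset.sum_add_distrib]
    rw [eL, eR, e]
    ring
  have hc := aux_linind P hPmonic hdeg c (k + 2) n (by omega) hsum
  -- extract equalities
  have hβt : βt n = β n := by
    have h0 := hc 0 (by omega)
    have h0' : b 0 * (β (n - 0) - βt n)
        + (if (0:ℕ) = 0 then (0:ℝ) else b (0 - 1) * (γ (n - 0 + 1) - γt n)) = 0 := h0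
    norm_num [hb0] at h0'
    linarith
  have hγtn : γt n = γ (n - k) := by
    have h0 := hc (k + 1) (by omega)
    rw [hcdef] at h0
    simp only [if_neg (by omega : ¬ k + 1 = 0)] at h0
    have e1 : k + 1 - 1 = k := by omega
    have e2 : n - (k + 1) + 1 = n - k := by omega
    rw [e1, e2, hbtop, hbj k (by omega) le_rfl] at h0
    have : a k * (γ (n - k) - γt n) = 0 := by linarith
    rcases mul_eq_zero.mp this with h | h
    · exact absurd h hak
    · linarith
  constructor
  · have h1 := hc 1 (by omega)
    rw [hcdef] at h1
    simp only [if_neg (by omega : ¬ (1:ℕ) = 0)] at h1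
    have e1 : (1:ℕ) - 1 = 0 := rfl
    have e2 : n - 1 + 1 = n := by omega
    rw [e1, e2, hb0, hbj 1 le_rfl hk, hβt, hγtn] at h1
    linarith
  · intro j hj2 hjk
    have hcj := hc j (by omega)
    rw [hcdef] at hcj
    simp only [if_neg (by omega : ¬ j = 0)] at hcj
    rw [hbj j (by omega) hjk, hbj (j - 1) (by omega) (by omega), hβt, hγtn] at hcj
    linarith
end

section
/- Let {P_n}_{n≥0} be a sequence of monic real polynomials with P_0 = 1, P_1(x) = x − β_0 and x·P_n(x) = P_{n+1}(x) + β_n·P_n(x) + γ_n·P_{n−1}(x) for all n ≥ 1, with γ_n ≠ 0 for all n ≥ 1. Let k ≥ 1, let a_1,…,a_k be real numbers with a_k ≠ 0, and let {Q_n}_{n≥0} be monic polynomials with deg Q_n = n such that Q_n = P_n + a_1·P_{n−1} + … + a_k·P_{n−k} for all n ≥ k+1. If {Q_n} satisfies a three-term recurrence x·Q_n(x) = Q_{n+1}(x) + β̃_n·Q_n(x) + γ̃_n·Q_{n−1}(x) for all n ≥ 1 with γ̃_n ≠ 0, then for every n ≥ k+1 one has β̃_n = β_n and γ̃_n = γ_n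 + a_1·(β_{n−1} − β_n). -/
open Polynomial Finset

theorem stmt_1 (P Q : ℕ → Polynomial ℝ) (β γ βt γt : ℕ → ℝ) (k : ℕ) (a : ℕ → ℝ)
    (hk : 1 ≤ k) (hak : a k ≠ 0)
    (hPmonic : ∀ n, (P n).Monic)
    (hP0 : P 0 = 1) (hP1 : P 1 = X - C (β 0))
    (hPrec : ∀ n, 1 ≤ n → X * P n = P (n + 1) + C (β n) * P n + C (γ n) * P (n - 1))
    (hγ : ∀ n, 1 ≤ n → γ n ≠ 0)
    (hQmonic : ∀ n, (Q n).Monic) (hQdeg : ∀ n, (Q n).natDegree = n)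
    (hQ : ∀ n, k + 1 ≤ n → Q n = P n + ∑ j ∈ Finset.Icc 1 k, C (a j) * P (n - j))
    (hQrec : ∀ n, 1 ≤ n → X * Q n = Q (n + 1) + C (βt n) * Q n + C (γt n) * Q (n - 1))
    (hγt : ∀ n, 1 ≤ n → γt n ≠ 0) :
    ∀ n, k + 1 ≤ n →
      βt n = β n ∧ γt n = γ n + a 1 * (β (n - 1) - β n) := by
  have hPdeg : ∀ m, (P m).natDegree = m := by
    intro m
    induction m using Nat.strong_induction_on with
    | _ m ih =>
      match m with
      | 0 => simp [hP0]
      | 1 => rw [hP1]; exact natDegree_X_sub_C _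
      | (t+2) =>
        have h := hPrec (t+1) (by omega)
        have ht : (t+1) - 1 = t := by omega
        have ht2 : t + 1 + 1 = t + 2 := by omega
        rw [ht, ht2] at h
        have hPt : P (t+2) = X * P (t+1) - (C (β (t+1)) * P (t+1) + C (γ (t+1)) * P t) := by
          linear_combination -h
        have d1 : (X * P (t+1)).natDegree = t + 2 := by
          rw [natDegree_mul X_ne_zero (hPmonic (t+1)).ne_zero, natDegree_X,
            ih (t+1) (by omega)]; omega
        rw [hPt, natDegree_sub_eq_left_of_natDegree_lt, d1]
        rw [d1]
        calc (C (β (t+1)) * P (t+1) + C (γ (t+1)) * P t).natDegree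
            ≤ max (C (β (t+1)) * P (t+1)).natDegree (C (γ (t+1)) * P t).natDegree :=
              natDegree_add_le _ _
          _ ≤ t + 1 := by
              apply max_le
              · exact (natDegree_C_mul_le _ _).trans (by rw [ih (t+1) (by omega)])
              · exact (natDegree_C_mul_le _ _).trans (by rw [ih t (by omega)]; omega)
          _ < t + 2 := by omega
  have hclt : ∀ m t : ℕ, m < t → (P m).coeff t = 0 := fun m t h =>
    coeff_eq_zero_of_natDegree_lt (by rw [hPdeg]; exact h)
  have hceq : ∀ m, (P m).coeff m = 1 := fun m => by
    have := (hPmonic m).coeff_natDegree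
    rwa [hPdeg m] at this
  intro n hn
  have hn2 : 2 ≤ n := by omega
  have e1 : P (n+1) + C (β n) * P n + C (γ n) * P (n-1)
        + ∑ j ∈ Icc 1 k, C (a j) * P (n-j+1)
        + ∑ j ∈ Icc 1 k, C (a j * β (n-j)) * P (n-j)
        + ∑ j ∈ Icc 1 k, C (a j * γ (n-j)) * P (n-j-1)
      = P (n+1) + ∑ j ∈ Icc 1 k, C (a j) * P (n-j+1)
        + C (βt n) * P n + ∑ j ∈ Icc 1 k, C (βt n * a j) * P (n-j)
        + C (γt n) * Q (n-1) := by
    have h0 := hQrec n (by omega)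
    rw [hQ n hn, hQ (n+1) (by omega)] at h0
    have hL : X * (P n + ∑ j ∈ Icc 1 k, C (a j) * P (n - j))
        = P (n+1) + C (β n) * P n + C (γ n) * P (n-1)
          + ∑ j ∈ Icc 1 k, C (a j) * P (n-j+1)
          + ∑ j ∈ Icc 1 k, C (a j * β (n-j)) * P (n-j)
          + ∑ j ∈ Icc 1 k, C (a j * γ (n-j)) * P (n-j-1) := by
      rw [mul_add, Finset.mul_sum, hPrec n (by omega)]
      rw [Finset.sum_congr rfl (fun j hj => by
        rw [mul_left_comm, hPrec (n-j) (by simp only [Finset.mem_Icc] at hj; omega)])]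
      simp only [mul_add, Finset.sum_add_distrib, C_mul, mul_assoc]
      ring
    have hR : (P (n+1) + ∑ j ∈ Icc 1 k, C (a j) * P (n + 1 - j))
          + C (βt n) * (P n + ∑ j ∈ Icc 1 k, C (a j) * P (n - j)) + C (γt n) * Q (n-1)
        = P (n+1) + ∑ j ∈ Icc 1 k, C (a j) * P (n-j+1)
          + C (βt n) * P n + ∑ j ∈ Icc 1 k, C (βt n * a j) * P (n-j)
          + C (γt n) * Q (n-1) := by
      rw [Finset.sum_congr rfl (fun j hj => by
        have : n + 1 - j = n - j + 1 := by simp only [Finset.mem_Icc] at hj; omega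
        rw [this])]
      simp only [mul_add, Finset.mul_sum, C_mul, mul_assoc]
      ring
    rw [hL, hR] at h0
    exact h0
  -- coefficient at degree n
  have E1 := congrArg (fun p => Polynomial.coeff p n) e1
  simp only [coeff_add, finset_sum_coeff, coeff_C_mul] at E1
  have S1 : (∑ x ∈ Icc 1 k, a x * β (n - x) * (P (n - x)).coeff n) = 0 :=
    Finset.sum_eq_zero fun j hj => by
      rw [hclt (n-j) n (by simp only [Finset.mem_Icc] at hj; omega)]; ring
  have S2 : (∑ x ∈ Icc 1 k, a x * γ (n - x) * (P (n - x - 1)).coeff n) = 0 :=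
    Finset.sum_eq_zero fun j hj => by
      rw [hclt (n-j-1) n (by simp only [Finset.mem_Icc] at hj; omega)]; ring
  have S3 : (∑ x ∈ Icc 1 k, βt n * a x * (P (n - x)).coeff n) = 0 :=
    Finset.sum_eq_zero fun j hj => by
      rw [hclt (n-j) n (by simp only [Finset.mem_Icc] at hj; omega)]; ring
  rw [hceq n, hclt (n-1) n (by omega), S1, S2, S3,
    coeff_eq_zero_of_natDegree_lt (p := Q (n-1)) (by rw [hQdeg]; omega)] at E1
  have hβ : βt n = β n := by linarith
  refine ⟨hβ, ?_⟩
  -- coefficient at degree n-1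
  have E2 := congrArg (fun p => Polynomial.coeff p (n-1)) e1
  simp only [coeff_add, finset_sum_coeff, coeff_C_mul] at E2
  have T1 : (∑ x ∈ Icc 1 k, a x * β (n - x) * (P (n - x)).coeff (n-1)) = a 1 * β (n - 1) := by
    rw [Finset.sum_eq_single_of_mem 1 (Finset.mem_Icc.mpr ⟨le_refl 1, hk⟩)
      (fun j hj hj1 => by
        rw [hclt (n-j) (n-1) (by simp only [Finset.mem_Icc] at hj; omega)]; ring),
      hceq (n-1)]
    ring
  have T2 : (∑ x ∈ Icc 1 k, a x * γ (n - x) * (P (n - x - 1)).coeff (n-1)) = 0 :=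
    Finset.sum_eq_zero fun j hj => by
      rw [hclt (n-j-1) (n-1) (by simp only [Finset.mem_Icc] at hj; omega)]; ring
  have T3 : (∑ x ∈ Icc 1 k, βt n * a x * (P (n - x)).coeff (n-1)) = βt n * a 1 := by
    rw [Finset.sum_eq_single_of_mem 1 (Finset.mem_Icc.mpr ⟨le_refl 1, hk⟩)
      (fun j hj hj1 => by
        rw [hclt (n-j) (n-1) (by simp only [Finset.mem_Icc] at hj; omega)]; ring),
      hceq (n-1)]
    ring
  have hQc : (Q (n-1)).coeff (n-1) = 1 := by
    have := (hQmonic (n-1)).coeff_natDegree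
    rwa [hQdeg (n-1)] at this
  rw [hceq (n-1), T1, T2, T3, hQc, hβ] at E2
  linear_combination -E2
end

section
/- Let {P_n}_{n≥0} be a sequence of monic real polynomials with P_0 = 1, P_1(x) = x − β_0 and x·P_n(x) = P_{n+1}(x) + β_n·P_n(x) + γ_n·P_{n−1}(x) for all n ≥ 1. Let k ≥ 1 and a_1,…,a_k be real numbers, and for m ≥ k+1 set Q_m = P_m + Σ_{j=1}^k a_j·P_{m−j}. Then for every n ≥ k+2 the following polynomial identity holds: x·Q_n(x) = Q_{n+1}(x) + β_n·Q_n(x) + [γ_n + a_1·(β_{n−1} − β_n)]·Q_{n−1}(x) + Σ_{j=2}^k { a_j·(β_{n−j} − β_n) − a_{j−1}·[γ_n − γ_{n−j+1} + a_1·(β_{n−1} − β_n)] }·P_{n−j}(x) − a_k·[γ_n − γ_{n−k} + a_1·(β_{n−1} − β_n)]·P_{n−k−1}(x). -/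
open Polynomial Finset

lemma sum_shift' {M : Type*} [AddCommMonoid M] (f : ℕ → M) (a b : ℕ) :
    ∑ j ∈ Icc (a+1) (b+1), f j = ∑ j ∈ Icc a b, f (j+1) := by
  rw [← Finset.map_add_right_Icc, Finset.sum_map]
  rfl

lemma split_bot' {M : Type*} [AddCommMonoid M] (f : ℕ → M) (k : ℕ) (hk : 1 ≤ k) :
    ∑ j ∈ Icc 1 k, f j = f 1 + ∑ j ∈ Icc 2 k, f j := by
  rw [show Icc 1 k = insert 1 (Icc 2 k) from by ext x; simp [mem_Icc, mem_insert]; omega,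
    Finset.sum_insert (by simp)]

lemma split_top' {M : Type*} [AddCommMonoid M] (f : ℕ → M) (k : ℕ) (hk : 1 ≤ k) :
    ∑ j ∈ Icc 1 k, f j = ∑ j ∈ Icc 1 (k-1), f j + f k := by
  obtain ⟨m, rfl⟩ : ∃ m, k = m + 1 := ⟨k-1, by omega⟩
  simp [Finset.sum_Icc_succ_top]

lemma shift2' {M : Type*} [AddCommMonoid M] (f : ℕ → M) (k : ℕ) (hk : 1 ≤ k) :
    ∑ j ∈ Icc 2 k, f j = ∑ j ∈ Icc 1 (k-1), f (j+1) := by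
  obtain ⟨m, rfl⟩ : ∃ m, k = m + 1 := ⟨k-1, by omega⟩
  simpa using sum_shift' f 1 m

theorem stmt_2 (P Q : ℕ → Polynomial ℝ) (β γ : ℕ → ℝ) (k : ℕ) (a : ℕ → ℝ)
    (hk : 1 ≤ k)
    (hPmonic : ∀ n, (P n).Monic)
    (hP0 : P 0 = 1) (hP1 : P 1 = X - C (β 0))
    (hPrec : ∀ n, 1 ≤ n → X * P n = P (n + 1) + C (β n) * P n + C (γ n) * P (n - 1))
    (hQ : ∀ m, k + 1 ≤ m → Q m = P m + ∑ j ∈ Finset.Icc 1 k, C (a j) * P (m - j)) :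
    ∀ n, k + 2 ≤ n →
      X * Q n = Q (n + 1) + C (β n) * Q n
        + C (γ n + a 1 * (β (n - 1) - β n)) * Q (n - 1)
        + ∑ j ∈ Finset.Icc 2 k,
            C (a j * (β (n - j) - β n)
               - a (j - 1) * (γ n - γ (n - j + 1) + a 1 * (β (n - 1) - β n))) * P (n - j)
        - C (a k * (γ n - γ (n - k) + a 1 * (β (n - 1) - β n))) * P (n - k - 1) := by
  intro n hn
  rw [hQ n (by omega), hQ (n+1) (by omega), hQ (n-1) (by omega)]
  -- LHS normal form
  have hL : X * (P n + ∑ j ∈ Icc 1 k, C (a j) * P (n - j))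
      = P (n+1) + C (β n) * P n + C (γ n) * P (n-1)
        + ∑ j ∈ Icc 1 k, C (a j) * P (n + 1 - j)
        + (C (a 1 * β (n-1)) * P (n-1)
          + ∑ j ∈ Icc 1 (k-1), C (a (j+1) * β (n-j-1) + a j * γ (n-j)) * P (n-j-1)
          + C (a k * γ (n-k)) * P (n-k-1)) := by
    have step1 : ∀ j ∈ Icc 1 k, X * (C (a j) * P (n - j))
        = C (a j) * P (n+1-j) + C (a j * β (n-j)) * P (n-j)
          + C (a j * γ (n-j)) * P (n-j-1) := by
      intro j hj
      simp only [mem_Icc] at hj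
      have hrec := hPrec (n - j) (by omega)
      rw [show n - j + 1 = n + 1 - j by omega] at hrec
      rw [show X * (C (a j) * P (n-j)) = C (a j) * (X * P (n-j)) by ring, hrec,
        map_mul, map_mul]
      ring
    rw [mul_add, Finset.mul_sum, Finset.sum_congr rfl step1, hPrec n (by omega),
      Finset.sum_add_distrib, Finset.sum_add_distrib,
      split_bot' (fun j => C (a j * β (n-j)) * P (n-j)) k hk,
      shift2' (fun j => C (a j * β (n-j)) * P (n-j)) k hk,
      split_top' (fun j => C (a j * γ (n-j)) * P (n-j-1)) k hk]
    have hm : ∑ j ∈ Icc 1 (k-1), C (a (j+1) * β (n-(j+1))) * P (n-(j+1))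
        + ∑ j ∈ Icc 1 (k-1), C (a j * γ (n-j)) * P (n-j-1)
        = ∑ j ∈ Icc 1 (k-1), C (a (j+1) * β (n-j-1) + a j * γ (n-j)) * P (n-j-1) := by
      rw [← Finset.sum_add_distrib]
      refine Finset.sum_congr rfl fun j hj => ?_
      rw [show n - (j+1) = n - j - 1 by omega, map_add]
      ring
    linear_combination hm
  rw [hL]
  -- RHS
  have hcβ : C (β n) * (P n + ∑ j ∈ Icc 1 k, C (a j) * P (n - j))
      = C (β n) * P n + (C (a 1 * β n) * P (n-1)
        + ∑ j ∈ Icc 1 (k-1), C (a (j+1) * β n) * P (n-j-1)) := by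
    rw [mul_add, Finset.mul_sum]
    rw [Finset.sum_congr rfl (fun j hj => show C (β n) * (C (a j) * P (n - j))
        = C (a j * β n) * P (n-j) by rw [map_mul]; ring)]
    rw [split_bot' (fun j => C (a j * β n) * P (n-j)) k hk,
      shift2' (fun j => C (a j * β n) * P (n-j)) k hk]
    have hm : ∑ j ∈ Icc 1 (k-1), C (a (j+1) * β n) * P (n-(j+1))
        = ∑ j ∈ Icc 1 (k-1), C (a (j+1) * β n) * P (n-j-1) := by
      refine Finset.sum_congr rfl fun j hj => ?_
      rw [show n - (j+1) = n - j - 1 by omega]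
    rw [hm]
  have hcγ : C (γ n + a 1 * (β (n - 1) - β n)) * (P (n-1) + ∑ j ∈ Icc 1 k, C (a j) * P (n - 1 - j))
      = C (γ n + a 1 * (β (n - 1) - β n)) * P (n-1)
        + (∑ j ∈ Icc 1 (k-1), C (a j * (γ n + a 1 * (β (n - 1) - β n))) * P (n-j-1)
          + C (a k * (γ n + a 1 * (β (n - 1) - β n))) * P (n-k-1)) := by
    rw [mul_add, Finset.mul_sum]
    rw [Finset.sum_congr rfl (fun j hj => show
        C (γ n + a 1 * (β (n - 1) - β n)) * (C (a j) * P (n - 1 - j))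
        = C (a j * (γ n + a 1 * (β (n - 1) - β n))) * P (n-j-1) by
      rw [show n - 1 - j = n - j - 1 by omega, map_mul]; ring)]
    rw [split_top' (fun j => C (a j * (γ n + a 1 * (β (n - 1) - β n))) * P (n-j-1)) k hk]
  have hd : ∑ j ∈ Finset.Icc 2 k,
        C (a j * (β (n - j) - β n)
           - a (j - 1) * (γ n - γ (n - j + 1) + a 1 * (β (n - 1) - β n))) * P (n - j)
      = ∑ j ∈ Icc 1 (k-1),
        C (a (j+1) * (β (n - j - 1) - β n)
           - a j * (γ n - γ (n - j) + a 1 * (β (n - 1) - β n))) * P (n - j - 1) := by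
    rw [shift2' (fun j => C (a j * (β (n - j) - β n)
           - a (j - 1) * (γ n - γ (n - j + 1) + a 1 * (β (n - 1) - β n))) * P (n - j)) k hk]
    refine Finset.sum_congr rfl fun j hj => ?_
    simp only [mem_Icc] at hj
    rw [show j + 1 - 1 = j by omega, show n - (j+1) = n - j - 1 by omega,
      show n - j - 1 + 1 = n - j by omega]
  rw [hcβ, hcγ, hd]
  -- merge the three middle sums
  have hmid : ∑ j ∈ Icc 1 (k-1), C (a (j+1) * β n) * P (n-j-1)
      + ∑ j ∈ Icc 1 (k-1), C (a j * (γ n + a 1 * (β (n - 1) - β n))) * P (n-j-1)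
      + ∑ j ∈ Icc 1 (k-1), C (a (j+1) * (β (n - j - 1) - β n)
           - a j * (γ n - γ (n - j) + a 1 * (β (n - 1) - β n))) * P (n - j - 1)
      = ∑ j ∈ Icc 1 (k-1), C (a (j+1) * β (n-j-1) + a j * γ (n-j)) * P (n-j-1) := by
    rw [← Finset.sum_add_distrib, ← Finset.sum_add_distrib]
    refine Finset.sum_congr rfl fun j hj => ?_
    rw [show (a (j+1) * β (n-j-1) + a j * γ (n-j))
        = (a (j+1) * β n) + (a j * (γ n + a 1 * (β (n - 1) - β n)))
          + (a (j+1) * (β (n - j - 1) - β n)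
             - a j * (γ n - γ (n - j) + a 1 * (β (n - 1) - β n))) by ring,
      map_add, map_add]
    ring
  have hb1 : C (γ n + a 1 * (β (n - 1) - β n)) * P (n-1) + C (a 1 * β n) * P (n-1)
      = C (γ n) * P (n-1) + C (a 1 * β (n-1)) * P (n-1) := by
    rw [show (γ n + a 1 * (β (n - 1) - β n)) = (γ n) + (a 1 * β (n-1) - a 1 * β n) by ring]
    simp only [map_add, map_sub, map_mul]
    ring
  have hb2 : C (a k * (γ n + a 1 * (β (n - 1) - β n))) * P (n-k-1)
      - C (a k * (γ n - γ (n - k) + a 1 * (β (n - 1) - β n))) * P (n-k-1)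
      = C (a k * γ (n-k)) * P (n-k-1) := by
    rw [show (a k * (γ n + a 1 * (β (n - 1) - β n)))
      = a k * γ (n-k) + (a k * (γ n - γ (n - k) + a 1 * (β (n - 1) - β n))) by ring, map_add]
    ring
  linear_combination -hmid - hb1 - hb2
end

section
/- Let {P_n}_{n≥0} be a sequence of monic real polynomials with P_0 = 1, P_1(x) = x − β_0 and x·P_n(x) = P_{n+1}(x) + β_n·P_n(x) + γ_n·P_{n−1}(x) for all n ≥ 1, with γ_n ≠ 0 for all n ≥ 1. Let k ≥ 1, let a_1,…,a_k be real numbers, and for m ≥ k+1 set Q_m = P_m + Σ_{j=1}^k a_j·P_{m−j}. Assume that for every n ≥ k+2: γ_n + a_1·(β_{n−1} − β_n) = γ_{n−k} and a_{j−1}·(γ_{n−k} − γ_{n−j+1}) = a_j·(β_{n−j} − β_n) for 2 ≤ j ≤ k. Then for every n ≥ k+2 one has x·Q_n(x) = Q_{n+1}(x) + β_n·Q_n(x) + γ_{n−k}·Q_{n−1}(x), and the coefficient γ_{n−k} is nonzero. -/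
open Polynomial Finset

theorem stmt_3 (P Q : ℕ → Polynomial ℝ) (β γ : ℕ → ℝ) (k : ℕ) (a : ℕ → ℝ)
    (hk : 1 ≤ k)
    (hPmonic : ∀ n, (P n).Monic)
    (hP0 : P 0 = 1) (hP1 : P 1 = X - C (β 0))
    (hPrec : ∀ n, 1 ≤ n → X * P n = P (n + 1) + C (β n) * P n + C (γ n) * P (n - 1))
    (hγ : ∀ n, 1 ≤ n → γ n ≠ 0)
    (hQ : ∀ m, k + 1 ≤ m → Q m = P m + ∑ j ∈ Finset.Icc 1 k, C (a j) * P (m - j))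
    (hcond1 : ∀ n, k + 2 ≤ n → γ n + a 1 * (β (n - 1) - β n) = γ (n - k))
    (hcond2 : ∀ n, k + 2 ≤ n → ∀ j, 2 ≤ j → j ≤ k →
        a (j - 1) * (γ (n - k) - γ (n - j + 1)) = a j * (β (n - j) - β n)) :
    ∀ n, k + 2 ≤ n →
      X * Q n = Q (n + 1) + C (β n) * Q n + C (γ (n - k)) * Q (n - 1) ∧
      γ (n - k) ≠ 0 := by
  intro n hn
  refine ⟨?_, hγ (n - k) (by omega)⟩
  rw [hQ n (by omega), hQ (n + 1) (by omega), hQ (n - 1) (by omega)]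
  have e1 : ∀ j ∈ Finset.Icc 1 k, C (a j) * P (n + 1 - j) = C (a j) * P (n - j + 1) := by
    intro j hj
    simp only [Finset.mem_Icc] at hj
    congr 2
    omega
  have e2 : ∀ j ∈ Finset.Icc 1 k, C (a j) * P (n - 1 - j) = C (a j) * P (n - j - 1) := by
    intro j hj
    congr 2
    omega
  rw [Finset.sum_congr rfl e1, Finset.sum_congr rfl e2]
  have e3 : ∀ j ∈ Finset.Icc 1 k, X * (C (a j) * P (n - j)) =
      C (a j) * P (n - j + 1) + C (a j * β (n - j)) * P (n - j)
        + C (a j * γ (n - j)) * P (n - j - 1) := by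
    intro j hj
    simp only [Finset.mem_Icc] at hj
    rw [mul_left_comm, hPrec (n - j) (by omega)]
    simp only [map_mul]
    ring
  rw [mul_add, Finset.mul_sum, Finset.sum_congr rfl e3, hPrec n (by omega),
    Finset.sum_add_distrib, Finset.sum_add_distrib]
  -- key claim
  have keyA : ∑ j ∈ Finset.Icc 1 k, C (a j * (β (n - j) - β n)) * P (n - j)
      + ∑ j ∈ Finset.Icc 1 k, C (a j * (γ (n - j) - γ (n - k))) * P (n - j - 1)
      = C (γ (n - k) - γ n) * P (n - 1) := by
    have hB : ∑ j ∈ Finset.Icc 1 k, C (a j * (γ (n - j) - γ (n - k))) * P (n - j - 1)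
        = ∑ j ∈ Finset.Icc 2 (k + 1),
            C (a (j - 1) * (γ (n - j + 1) - γ (n - k))) * P (n - j) := by
      refine Finset.sum_nbij' (fun j => j + 1) (fun j => j - 1) ?_ ?_ ?_ ?_ ?_
      · intro x hx; simp only [Finset.mem_Icc] at *; omega
      · intro x hx; simp only [Finset.mem_Icc] at *; omega
      · intro x hx; omega
      · intro x hx; simp only [Finset.mem_Icc] at hx; omega
      · intro x hx
        simp only [Finset.mem_Icc] at hx
        have h1 : x + 1 - 1 = x := by omega
        have h2 : n - (x + 1) + 1 = n - x := by omega
        have h3 : n - (x + 1) = n - x - 1 := by omega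
        rw [h1, h2, h3]
    rw [hB, Finset.sum_Icc_succ_top (by omega)]
    have hz : a (k + 1 - 1) * (γ (n - (k + 1) + 1) - γ (n - k)) = 0 := by
      have : n - (k + 1) + 1 = n - k := by omega
      rw [this]; ring
    rw [hz, map_zero, zero_mul, add_zero]
    have hsplit : Finset.Icc 1 k = insert 1 (Finset.Icc 2 k) := by
      ext x
      simp only [Finset.mem_insert, Finset.mem_Icc]
      omega
    rw [hsplit, Finset.sum_insert (by simp)]
    have hcancel : ∑ j ∈ Finset.Icc 2 k, C (a j * (β (n - j) - β n)) * P (n - j)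
        + ∑ j ∈ Finset.Icc 2 k, C (a (j - 1) * (γ (n - j + 1) - γ (n - k))) * P (n - j)
        = 0 := by
      rw [← Finset.sum_add_distrib]
      refine Finset.sum_eq_zero ?_
      intro j hj
      simp only [Finset.mem_Icc] at hj
      have h2 := hcond2 n hn j hj.1 hj.2
      rw [← add_mul, ← map_add]
      have : a j * (β (n - j) - β n) + a (j - 1) * (γ (n - j + 1) - γ (n - k)) = 0 := by
        linarith
      rw [this, map_zero, zero_mul]
    have h1 := hcond1 n hn
    have hcoef : a 1 * (β (n - 1) - β n) = γ (n - k) - γ n := by linarith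
    rw [add_assoc, hcancel, add_zero, hcoef]
  calc P (n + 1) + C (β n) * P n + C (γ n) * P (n - 1)
      + (∑ j ∈ Finset.Icc 1 k, C (a j) * P (n - j + 1)
        + ∑ j ∈ Finset.Icc 1 k, C (a j * β (n - j)) * P (n - j)
        + ∑ j ∈ Finset.Icc 1 k, C (a j * γ (n - j)) * P (n - j - 1))
      = P (n + 1) + ∑ j ∈ Finset.Icc 1 k, C (a j) * P (n - j + 1)
        + C (β n) * (P n + ∑ j ∈ Finset.Icc 1 k, C (a j) * P (n - j))
        + C (γ (n - k)) * (P (n - 1) + ∑ j ∈ Finset.Icc 1 k, C (a j) * P (n - j - 1)) := by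
        have expand1 : ∑ j ∈ Finset.Icc 1 k, C (a j * β (n - j)) * P (n - j)
            = ∑ j ∈ Finset.Icc 1 k, (C (a j * (β (n - j) - β n)) * P (n - j)
              + C (β n) * (C (a j) * P (n - j))) := by
          refine Finset.sum_congr rfl fun j hj => ?_
          simp only [map_mul, map_sub]
          ring
        have expand2 : ∑ j ∈ Finset.Icc 1 k, C (a j * γ (n - j)) * P (n - j - 1)
            = ∑ j ∈ Finset.Icc 1 k, (C (a j * (γ (n - j) - γ (n - k))) * P (n - j - 1)
              + C (γ (n - k)) * (C (a j) * P (n - j - 1))) := by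
          refine Finset.sum_congr rfl fun j hj => ?_
          simp only [map_mul, map_sub]
          ring
        rw [expand1, expand2, Finset.sum_add_distrib, Finset.sum_add_distrib,
          ← Finset.mul_sum, ← Finset.mul_sum, mul_add, mul_add]
        rw [map_sub] at keyA
        linear_combination keyA
end

section
/- Let {P_n}_{n≥0} be a sequence of monic real polynomials with P_0 = 1, P_1(x) = x − β_0 and x·P_n(x) = P_{n+1}(x) + β_n·P_n(x) + γ_n·P_{n−1}(x) for all n ≥ 1, with γ_n ≠ 0 for all n ≥ 1. Let k ≥ 1, let a_1,…,a_k be real numbers with a_k ≠ 0, and let {Q_n}_{n≥0} be monic polynomials with deg Q_n = n such that Q_n = P_n + a_1·P_{n−1} + … + a_k·P_{n−k} for all n ≥ k+1, and suppose {Q_n} satisfies a three-term recurrence x·Q_n(x) = Q_{n+1}(x) + β̃_n·Q_n(x) + γ̃_n·Q_{n−1}(x) for all n ≥ 1 with γ̃_n ≠ 0. Let a_1^{(k)},…,a_k^{(k)} be the (unique) real numbers such that Q_k = P_k + Σ_{j=1}^k a_j^{(k)}·P_{k−j}. Then: γ_{k+1} + a_1·(β_k − β_{k+1}) ≠ 0;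 for each j with 1 ≤ j ≤ k−1, a_j·γ_{k−j+1} + a_{j+1}·(β_{k−j} − β_{k+1}) = a_j^{(k)}·[γ_{k+1} + a_1·(β_k − β_{k+1})]; and a_k·γ_1 = a_k^{(k)}·[γ_{k+1} + a_1·(β_k − β_{k+1})]. -/
open Polynomial Finset

private lemma pdeg_aux (P : ℕ → Polynomial ℝ) (β γ : ℕ → ℝ)
    (hP0 : P 0 = 1) (hP1 : P 1 = X - C (β 0))
    (hPrec : ∀ n, 1 ≤ n → X * P n = P (n + 1) + C (β n) * P n + C (γ n) * P (n - 1)) :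
    ∀ n, (P n).natDegree = n := by
  intro n
  induction n using Nat.twoStepInduction with
  | zero => simp [hP0]
  | one => simp [hP1]
  | more n ih1 ih2 =>
    have h := hPrec (n + 1) (by omega)
    have hP2 : P (n + 2) = X * P (n + 1) - (C (β (n + 1)) * P (n + 1) + C (γ (n + 1)) * P n) := by
      rw [show n + 1 + 1 = n + 2 from rfl, show n + 1 - 1 = n from rfl] at h
      linear_combination -h
    have hne : P (n + 1) ≠ 0 := by
      intro h0
      rw [h0] at ih2
      simp at ih2
    have hXdeg : (X * P (n + 1)).natDegree = n + 2 := by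
      rw [natDegree_mul X_ne_zero hne, natDegree_X, ih2]
      omega
    rw [hP2, natDegree_sub_eq_left_of_natDegree_lt, hXdeg]
    rw [hXdeg]
    refine lt_of_le_of_lt (natDegree_add_le _ _) ?_
    have b1 := natDegree_C_mul_le (β (n + 1)) (P (n + 1))
    have b2 := natDegree_C_mul_le (γ (n + 1)) (P n)
    rw [ih2] at b1; rw [ih1] at b2
    omega

private lemma uniq_aux (P : ℕ → Polynomial ℝ) (hm : ∀ n, (P n).Monic)
    (hd : ∀ n, (P n).natDegree = n) :
    ∀ N (c : ℕ → ℝ), (∑ i ∈ range (N + 1), C (c i) * P i) = 0 → ∀ i, i ≤ N → c i = 0 := by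
  intro N
  induction N with
  | zero =>
    intro c h i hi
    interval_cases i
    simp only [zero_add, range_one, sum_singleton] at h
    rcases mul_eq_zero.mp h with h | h
    · exact C_eq_zero.mp h
    · exact absurd h (hm 0).ne_zero
  | succ N ih =>
    intro c h i hi
    have htop : c (N + 1) = 0 := by
      have hco := congrArg (fun p => Polynomial.coeff p (N + 1)) h
      simp only [finset_sum_coeff, coeff_C_mul, coeff_zero] at hco
      rw [Finset.sum_eq_single (N + 1)] at hco
      · have h1 : (P (N + 1)).coeff (N + 1) = 1 := by
          have := (hm (N + 1)).coeff_natDegree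
          rwa [hd] at this
        rw [h1, mul_one] at hco
        exact hco
      · intro b hb hbne
        simp only [mem_range] at hb
        have : (P b).coeff (N + 1) = 0 :=
          coeff_eq_zero_of_natDegree_lt (by rw [hd]; omega)
        rw [this, mul_zero]
      · intro hb
        simp only [mem_range] at hb
        omega
    rcases Nat.lt_or_ge i (N + 1) with hlt | hge
    · apply ih c _ i (by omega)
      rw [Finset.sum_range_succ, htop] at h
      simpa using h
    · have : i = N + 1 := by omega
      rw [this]; exact htop

theorem stmt_4 (P Q : ℕ → Polynomial ℝ) (β γ βt γt : ℕ → ℝ) (k : ℕ) (a a' : ℕ → ℝ)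
    (hk : 1 ≤ k) (hak : a k ≠ 0)
    (hPmonic : ∀ n, (P n).Monic)
    (hP0 : P 0 = 1) (hP1 : P 1 = X - C (β 0))
    (hPrec : ∀ n, 1 ≤ n → X * P n = P (n + 1) + C (β n) * P n + C (γ n) * P (n - 1))
    (hγ : ∀ n, 1 ≤ n → γ n ≠ 0)
    (hQmonic : ∀ n, (Q n).Monic) (hQdeg : ∀ n, (Q n).natDegree = n)
    (hQ : ∀ n, k + 1 ≤ n → Q n = P n + ∑ j ∈ Finset.Icc 1 k, C (a j) * P (n - j))
    (hQrec : ∀ n, 1 ≤ n → X * Q n = Q (n + 1) + C (βt n) * Q n + C (γt n) * Q (n - 1))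
    (hγt : ∀ n, 1 ≤ n → γt n ≠ 0)
    (hQk : Q k = P k + ∑ j ∈ Finset.Icc 1 k, C (a' j) * P (k - j)) :
    γ (k + 1) + a 1 * (β k - β (k + 1)) ≠ 0 ∧
    (∀ j, 1 ≤ j → j ≤ k - 1 →
      a j * γ (k - j + 1) + a (j + 1) * (β (k - j) - β (k + 1))
        = a' j * (γ (k + 1) + a 1 * (β k - β (k + 1)))) ∧
    a k * γ 1 = a' k * (γ (k + 1) + a 1 * (β k - β (k + 1))) := by
  have hd := pdeg_aux P β γ hP0 hP1 hPrec
  set E : ℕ → ℝ := fun i =>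
    if i = k + 1 then β (k + 1) - βt (k + 1)
    else if i = k then γ (k + 1) + a 1 * (β k - βt (k + 1)) - γt (k + 1)
    else a (k - i) * γ (i + 1) + (if 1 ≤ i then a (k + 1 - i) * (β i - βt (k + 1)) else 0)
          - γt (k + 1) * a' (k - i)
    with hEdef
  -- reindexing lemmas
  have hre1 : ∀ f : ℕ → ℕ → Polynomial ℝ,
      ∑ j ∈ Icc 1 k, f j (k + 1 - j) = ∑ i ∈ Icc 1 k, f (k + 1 - i) i := by
    intro f
    refine Finset.sum_nbij' (fun j => k + 1 - j) (fun i => k + 1 - i) ?_ ?_ ?_ ?_ ?_ <;>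
      intro x hx <;> simp only [mem_Icc] at hx ⊢ <;> try omega
    rw [show k + 1 - (k + 1 - x) = x by omega]
  have hre2 : ∀ f : ℕ → ℕ → Polynomial ℝ,
      ∑ j ∈ Icc 1 k, f j (k - j) = ∑ i ∈ range k, f (k - i) i := by
    intro f
    refine Finset.sum_nbij' (fun j => k - j) (fun i => k - i) ?_ ?_ ?_ ?_ ?_ <;>
      intro x hx <;> simp only [mem_Icc, mem_range] at hx ⊢ <;> try omega
    rw [show k - (k - x) = x by omega]
  -- main expansions
  have hXP : ∀ j ∈ Icc 1 k, X * (C (a j) * P (k + 1 - j))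
      = C (a j) * P (k + 2 - j) + C (a j * β (k + 1 - j)) * P (k + 1 - j)
        + C (a j * γ (k + 1 - j)) * P (k - j) := by
    intro j hj
    simp only [mem_Icc] at hj
    have h := hPrec (k + 1 - j) (by omega)
    rw [show k + 1 - j + 1 = k + 2 - j by omega, show k + 1 - j - 1 = k - j by omega] at h
    rw [mul_left_comm, h, map_mul, map_mul]
    ring
  have hE1 : X * Q (k + 1)
      = P (k + 2) + C (β (k + 1)) * P (k + 1) + C (γ (k + 1)) * P k
        + (∑ j ∈ Icc 1 k, C (a j) * P (k + 2 - j))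
        + (∑ i ∈ Icc 1 k, C (a (k + 1 - i) * β i) * P i)
        + (∑ i ∈ range k, C (a (k - i) * γ (i + 1)) * P i) := by
    rw [hQ (k + 1) (by omega), mul_add, Finset.mul_sum]
    rw [Finset.sum_congr rfl hXP, Finset.sum_add_distrib, Finset.sum_add_distrib]
    have e1 : ∑ j ∈ Icc 1 k, C (a j * β (k + 1 - j)) * P (k + 1 - j)
        = ∑ i ∈ Icc 1 k, C (a (k + 1 - i) * β i) * P i :=
      hre1 (fun j i => C (a j * β i) * P i)
    have e2 : ∑ j ∈ Icc 1 k, C (a j * γ (k + 1 - j)) * P (k - j)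
        = ∑ i ∈ range k, C (a (k - i) * γ (i + 1)) * P i := by
      have hcg : ∀ j ∈ Icc 1 k, C (a j * γ (k + 1 - j)) * P (k - j)
          = (fun j i => C (a j * γ (i + 1)) * P i) j (k - j) := by
        intro j hj
        simp only [mem_Icc] at hj
        rw [show k + 1 - j = k - j + 1 by omega]
      rw [Finset.sum_congr rfl hcg, hre2 (fun j i => C (a j * γ (i + 1)) * P i)]
    rw [e1, e2]
    have hX1 : X * P (k + 1) = P (k + 2) + C (β (k + 1)) * P (k + 1) + C (γ (k + 1)) * P k :=
      hPrec (k + 1) (by omega)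
    rw [hX1]
    ring
  have hE2 : Q (k + 2) = P (k + 2) + ∑ j ∈ Icc 1 k, C (a j) * P (k + 2 - j) :=
    hQ (k + 2) (by omega)
  have hE3 : C (βt (k + 1)) * Q (k + 1)
      = C (βt (k + 1)) * P (k + 1) + ∑ i ∈ Icc 1 k, C (βt (k + 1) * a (k + 1 - i)) * P i := by
    rw [hQ (k + 1) (by omega), mul_add, Finset.mul_sum]
    congr 1
    rw [← hre1 (fun j i => C (βt (k + 1) * a j) * P i)]
    refine Finset.sum_congr rfl fun j hj => ?_
    rw [← mul_assoc, ← map_mul]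
  have hE4 : C (γt (k + 1)) * Q k
      = C (γt (k + 1)) * P k + ∑ i ∈ range k, C (γt (k + 1) * a' (k - i)) * P i := by
    rw [hQk, mul_add, Finset.mul_sum]
    congr 1
    rw [← hre2 (fun j i => C (γt (k + 1) * a' j) * P i)]
    refine Finset.sum_congr rfl fun j hj => ?_
    rw [← mul_assoc, ← map_mul]
  have hsplit : (∑ i ∈ Icc 1 k, C (a (k + 1 - i) * β i) * P i)
        - (∑ i ∈ Icc 1 k, C (βt (k + 1) * a (k + 1 - i)) * P i)
      = (∑ i ∈ Icc 1 (k - 1), C (a (k + 1 - i) * (β i - βt (k + 1))) * P i)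
        + C (a 1 * (β k - βt (k + 1))) * P k := by
    rw [← Finset.sum_sub_distrib]
    have hterm : ∀ i ∈ Icc 1 k,
        C (a (k + 1 - i) * β i) * P i - C (βt (k + 1) * a (k + 1 - i)) * P i
        = C (a (k + 1 - i) * (β i - βt (k + 1))) * P i := by
      intro i hi
      rw [← sub_mul, ← map_sub,
        show a (k + 1 - i) * β i - βt (k + 1) * a (k + 1 - i)
          = a (k + 1 - i) * (β i - βt (k + 1)) by ring]
    rw [Finset.sum_congr rfl hterm]
    have hkk : Icc 1 k = Icc 1 (k - 1 + 1) := by rw [Nat.sub_add_cancel hk]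
    rw [hkk, Finset.sum_Icc_succ_top (by omega), Nat.sub_add_cancel hk,
      show k + 1 - k = 1 by omega]
  have hq := hQrec (k + 1) (by omega)
  rw [show k + 1 + 1 = k + 2 from rfl, show k + 1 - 1 = k from rfl] at hq
  have Hmaster : C (β (k + 1)) * P (k + 1) - C (βt (k + 1)) * P (k + 1)
      + (C (γ (k + 1)) + C (a 1 * (β k - βt (k + 1))) - C (γt (k + 1))) * P k
      + (∑ i ∈ range k, C (a (k - i) * γ (i + 1)) * P i)
      + (∑ i ∈ Icc 1 (k - 1), C (a (k + 1 - i) * (β i - βt (k + 1))) * P i)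
      - (∑ i ∈ range k, C (γt (k + 1) * a' (k - i)) * P i) = 0 := by
    linear_combination hq - hE1 + hE2 + hE3 + hE4 - hsplit
  have H : ∑ i ∈ range (k + 1 + 1), C (E i) * P i = 0 := by
    rw [Finset.sum_range_succ, Finset.sum_range_succ]
    have hEtop : E (k + 1) = β (k + 1) - βt (k + 1) := by simp [hEdef]
    have hEk : E k = γ (k + 1) + a 1 * (β k - βt (k + 1)) - γt (k + 1) := by
      simp [hEdef, show ¬ k = k + 1 by omega]
    have hIcc : ∑ i ∈ Icc 1 (k - 1), C (a (k + 1 - i) * (β i - βt (k + 1))) * P i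
        = ∑ i ∈ range k, if 1 ≤ i then C (a (k + 1 - i) * (β i - βt (k + 1))) * P i else 0 := by
      rw [← Finset.sum_filter]
      have hset : (range k).filter (fun i => 1 ≤ i) = Icc 1 (k - 1) := by
        ext x
        simp only [mem_filter, mem_range, mem_Icc]
        omega
      rw [hset]
    have hrest : ∑ i ∈ range k, C (E i) * P i
        = (∑ i ∈ range k, C (a (k - i) * γ (i + 1)) * P i)
          + (∑ i ∈ Icc 1 (k - 1), C (a (k + 1 - i) * (β i - βt (k + 1))) * P i)
          - (∑ i ∈ range k, C (γt (k + 1) * a' (k - i)) * P i) := by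
      rw [hIcc, ← Finset.sum_add_distrib, ← Finset.sum_sub_distrib]
      refine Finset.sum_congr rfl fun i hi => ?_
      simp only [mem_range] at hi
      have h1 : ¬ i = k + 1 := by omega
      have h2 : ¬ i = k := by omega
      simp only [hEdef, if_neg h1, if_neg h2]
      by_cases h3 : 1 ≤ i
      · simp only [if_pos h3, map_add, map_sub]
        ring
      · simp only [if_neg h3, add_zero, map_sub]
        ring
    rw [hrest, hEtop, hEk]
    rw [map_sub, map_sub, map_add]
    linear_combination Hmaster
  have hz := uniq_aux P hPmonic hd (k + 1) E H
  have e1 := hz (k + 1) le_rfl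
  simp only [hEdef, if_true] at e1
  have e2 := hz k (by omega)
  simp only [hEdef, if_true] at e2
  rw [if_neg (show ¬ k = k + 1 by omega)] at e2
  have hbt : βt (k + 1) = β (k + 1) := by linarith
  rw [hbt] at e2
  have hgt : γt (k + 1) = γ (k + 1) + a 1 * (β k - β (k + 1)) := by linarith
  refine ⟨by rw [← hgt]; exact hγt (k + 1) (by omega), ?_, ?_⟩
  · intro j hj1 hj2
    have e := hz (k - j) (by omega)
    simp only [hEdef, show k - (k - j) = j by omega, show k + 1 - (k - j) = j + 1 by omega] at e
    rw [if_neg (show ¬ k - j = k + 1 by omega), if_neg (show ¬ k - j = k by omega),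
      if_pos (show 1 ≤ k - j by omega), hbt] at e
    rw [← hgt]
    linear_combination e
  · have e := hz 0 (by omega)
    simp only [hEdef, if_neg (show ¬ (0 : ℕ) = k + 1 by omega),
      if_neg (show ¬ (0 : ℕ) = k by omega), if_neg (show ¬ (1 : ℕ) ≤ 0 by omega),
      Nat.sub_zero, add_zero, zero_add] at e
    rw [← hgt]
    linear_combination e
end

section
/- Let {P_n}_{n≥0} be a sequence of monic real polynomials with P_0 = 1, P_1(x) = x − β_0 and x·P_n(x) = P_{n+1}(x) + β_n·P_n(x) + γ_n·P_{n−1}(x) for all n ≥ 1, with γ_n ≠ 0 for all n ≥ 1. Let a_2 be a nonzero real number and let {Q_n}_{n≥0} be monic polynomials with deg Q_n = n such that Q_n = P_n + a_2·P_{n−2} for all n ≥ 3, and suppose {Q_n} satisfies a three-term recurrence x·Q_n(x) = Q_{n+1}(x) + β̃_n·Q_n(x) + γ̃_n·Q_{n−1}(x) for all n ≥ 1 with γ̃_n ≠ 0. Then for every n ≥ 4, β_n = β_{n−2} and γ_n = γ_{n−2}. -/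
open Polynomial

theorem stmt_5 (P Q : ℕ → Polynomial ℝ) (β γ βt γt : ℕ → ℝ) (a2 : ℝ) (ha2 : a2 ≠ 0)
    (hPmonic : ∀ n, (P n).Monic)
    (hP0 : P 0 = 1) (hP1 : P 1 = X - C (β 0))
    (hPrec : ∀ n, 1 ≤ n → X * P n = P (n + 1) + C (β n) * P n + C (γ n) * P (n - 1))
    (hγ : ∀ n, 1 ≤ n → γ n ≠ 0)
    (hQmonic : ∀ n, (Q n).Monic) (hQdeg : ∀ n, (Q n).natDegree = n)
    (hQ : ∀ n, 3 ≤ n → Q n = P n + C a2 * P (n - 2))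
    (hQrec : ∀ n, 1 ≤ n → X * Q n = Q (n + 1) + C (βt n) * Q n + C (γt n) * Q (n - 1))
    (hγt : ∀ n, 1 ≤ n → γt n ≠ 0) :
    ∀ n, 4 ≤ n → β n = β (n - 2) ∧ γ n = γ (n - 2) := by
  -- degrees of P
  have hdeg : ∀ n, (P n).natDegree = n := by
    intro n
    induction n using Nat.strong_induction_on with
    | _ n ih =>
      match n with
      | 0 => simp [hP0]
      | 1 => rw [hP1]; exact natDegree_X_sub_C _
      | (k+2) =>
        have h := hPrec (k+1) (by omega)
        have hk : (P k).natDegree = k := ih k (by omega)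
        have hk1 : (P (k+1)).natDegree = k+1 := ih (k+1) (by omega)
        have hP2 : P (k+2) = (X - C (β (k+1))) * P (k+1) - C (γ (k+1)) * P k := by
          have hk' : (k+1) - 1 = k := rfl
          rw [hk'] at h
          linear_combination -h
        have h1 : ((X - C (β (k+1))) * P (k+1)).natDegree = k+2 := by
          rw [natDegree_mul (X_sub_C_ne_zero _) (hPmonic (k+1)).ne_zero,
            natDegree_X_sub_C, hk1]
          omega
        have h2 : (C (γ (k+1)) * P k).natDegree < k + 2 := by
          calc (C (γ (k+1)) * P k).natDegree ≤ (P k).natDegree := natDegree_C_mul_le _ _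
          _ < k + 2 := by omega
        rw [hP2, natDegree_sub_eq_left_of_natDegree_lt (by rw [h1]; exact h2), h1]
  have coeffP : ∀ i j : ℕ, j < i → (P j).coeff i = 0 := fun i j h =>
    coeff_eq_zero_of_natDegree_lt (by rw [hdeg]; exact h)
  have coeffPd : ∀ i, (P i).coeff i = 1 := fun i => by
    have := (hPmonic i).coeff_natDegree; rwa [hdeg] at this
  -- linear independence
  have key : ∀ (m : ℕ) (c3 c2 c1 c0 : ℝ),
      C c3 * P (m+3) + C c2 * P (m+2) + C c1 * P (m+1) + C c0 * P m = 0 →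
      c3 = 0 ∧ c2 = 0 ∧ c1 = 0 ∧ c0 = 0 := by
    intro m c3 c2 c1 c0 h
    have e3 := congrArg (fun p => Polynomial.coeff p (m+3)) h
    simp only [coeff_add, coeff_C_mul, coeff_zero] at e3
    rw [coeffPd (m+3), coeffP (m+3) (m+2) (by omega), coeffP (m+3) (m+1) (by omega),
      coeffP (m+3) m (by omega)] at e3
    have hc3 : c3 = 0 := by simpa using e3
    rw [hc3, map_zero, zero_mul, zero_add] at h
    have e2 := congrArg (fun p => Polynomial.coeff p (m+2)) h
    simp only [coeff_add, coeff_C_mul, coeff_zero] at e2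
    rw [coeffPd (m+2), coeffP (m+2) (m+1) (by omega), coeffP (m+2) m (by omega)] at e2
    have hc2 : c2 = 0 := by simpa using e2
    rw [hc2, map_zero, zero_mul, zero_add] at h
    have e1 := congrArg (fun p => Polynomial.coeff p (m+1)) h
    simp only [coeff_add, coeff_C_mul, coeff_zero] at e1
    rw [coeffPd (m+1), coeffP (m+1) m (by omega)] at e1
    have hc1 : c1 = 0 := by simpa using e1
    rw [hc1, map_zero, zero_mul, zero_add] at h
    have e0 := congrArg (fun p => Polynomial.coeff p m) h
    simp only [coeff_C_mul, coeff_zero] at e0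
    rw [coeffPd m] at e0
    have hc0 : c0 = 0 := by simpa using e0
    exact ⟨hc3, hc2, hc1, hc0⟩
  intro n hn
  obtain ⟨m, rfl⟩ : ∃ m, n = m + 4 := ⟨n - 4, by omega⟩
  have e1 := hQrec (m+4) (by omega)
  have e2 := hPrec (m+4) (by omega)
  have e3 := hPrec (m+2) (by omega)
  rw [hQ (m+4) (by omega), hQ (m+4+1) (by omega), hQ (m+4-1) (by omega)] at e1
  have hi1 : m+4-1 = m+3 := rfl
  have hi2 : m+4-2 = m+2 := rfl
  have hi3 : m+4+1-2 = m+3 := rfl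
  have hi4 : m+3-2 = m+1 := rfl
  have hi5 : m+2-1 = m+1 := rfl
  rw [hi1, hi2, hi3, hi4] at e1
  rw [hi1] at e2
  rw [hi5] at e3
  have heq : C (β (m+4) - βt (m+4)) * P (m+1+3) + C (γ (m+4) - γt (m+4)) * P (m+1+2) +
      C (a2 * (β (m+2) - βt (m+4))) * P (m+1+1) + C (a2 * (γ (m+2) - γt (m+4))) * P (m+1) = 0 := by
    show C (β (m+4) - βt (m+4)) * P (m+4) + C (γ (m+4) - γt (m+4)) * P (m+3) +
      C (a2 * (β (m+2) - βt (m+4))) * P (m+2) + C (a2 * (γ (m+2) - γt (m+4))) * P (m+1) = 0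
    simp only [C_sub, C_mul]
    linear_combination e1 - e2 - C a2 * e3
  obtain ⟨hc3, hc2, hc1, hc0⟩ := key (m+1) _ _ _ _ heq
  have hb2 : β (m+2) = βt (m+4) := by
    rcases mul_eq_zero.mp hc1 with h | h
    · exact absurd h ha2
    · linarith
  have hg2 : γ (m+2) = γt (m+4) := by
    rcases mul_eq_zero.mp hc0 with h | h
    · exact absurd h ha2
    · linarith
  constructor
  · show β (m+4) = β (m+2)
    have : β (m+4) = βt (m+4) := by linarith
    rw [this, hb2]
  · show γ (m+4) = γ (m+2)
    have : γ (m+4) = γt (m+4) := by linarith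
    rw [this, hg2]
end

section
/- Let {P_n}_{n≥0} be a sequence of monic real polynomials with P_0 = 1, P_1(x) = x − β_0 and x·P_n(x) = P_{n+1}(x) + β_n·P_n(x) + γ_n·P_{n−1}(x) for all n ≥ 1, with γ_n ≠ 0 for all n ≥ 1. Let a_1, a_2 be real numbers with a_1 ≠ 0 and a_1² = 4·a_2, and let {Q_n}_{n≥0} be monic polynomials with deg Q_n = n such that Q_n = P_n + a_1·P_{n−1} + a_2·P_{n−2} for all n ≥ 3, and suppose {Q_n} satisfies a three-term recurrence x·Q_n(x) = Q_{n+1}(x) + β̃_n·Q_n(x) + γ̃_n·Q_{n−1}(x) for all n ≥ 1 with γ̃_n ≠ 0. Then there exist real numbers A, B, C, D, E, F such that for all n ≥ 2: β_n = A + B·n + C·n² and γ_n = D + E·n + F·n², and moreover a_1·C = 2·F and a_1·B = 2·E − 2·F. -/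
open Polynomial

theorem stmt_6 (P Q : ℕ → Polynomial ℝ) (β γ βt γt : ℕ → ℝ) (a1 a2 : ℝ)
    (ha1 : a1 ≠ 0) (ha : a1 ^ 2 = 4 * a2)
    (hPmonic : ∀ n, (P n).Monic)
    (hP0 : P 0 = 1) (hP1 : P 1 = X - Polynomial.C (β 0))
    (hPrec : ∀ n, 1 ≤ n → X * P n
      = P (n + 1) + Polynomial.C (β n) * P n + Polynomial.C (γ n) * P (n - 1))
    (hγ : ∀ n, 1 ≤ n → γ n ≠ 0)
    (hQmonic : ∀ n, (Q n).Monic) (hQdeg : ∀ n, (Q n).natDegree = n)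
    (hQ : ∀ n, 3 ≤ n → Q n = P n + Polynomial.C a1 * P (n - 1) + Polynomial.C a2 * P (n - 2))
    (hQrec : ∀ n, 1 ≤ n → X * Q n
      = Q (n + 1) + Polynomial.C (βt n) * Q n + Polynomial.C (γt n) * Q (n - 1))
    (hγt : ∀ n, 1 ≤ n → γt n ≠ 0) :
    ∃ A B C D E F : ℝ,
      (∀ n : ℕ, 2 ≤ n → β n = A + B * n + C * n ^ 2 ∧ γ n = D + E * n + F * n ^ 2) ∧
      a1 * C = 2 * F ∧ a1 * B = 2 * E - 2 * F := by
  have ha2 : a2 ≠ 0 := by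
    intro h; apply ha1; have : a1 ^ 2 = 0 := by rw [ha, h]; ring
    exact pow_eq_zero_iff (by norm_num) |>.mp this
  -- degrees
  have hdeg : ∀ n, (P n).natDegree = n := by
    have key : ∀ n, (P n).natDegree = n ∧ (P (n+1)).natDegree = n+1 := by
      intro n
      induction n with
      | zero =>
        constructor
        · rw [hP0]; simp
        · rw [hP1]; exact natDegree_X_sub_C _
      | succ k ih =>
        refine ⟨ih.2, ?_⟩
        have h := hPrec (k+1) (by omega)
        rw [show k + 1 - 1 = k by omega, show k + 1 + 1 = k + 2 by omega] at h
        have hr : P (k+2) = X * P (k+1) - C (β (k+1)) * P (k+1) - C (γ (k+1)) * P k := by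
          linear_combination -h
        have hX : (X * P (k+1)).natDegree = k + 2 := by
          rw [natDegree_mul X_ne_zero (hPmonic (k+1)).ne_zero, natDegree_X, ih.2]
          omega
        have hb : (C (β (k+1)) * P (k+1)).natDegree < (X * P (k+1)).natDegree := by
          have := natDegree_C_mul_le (β (k+1)) (P (k+1))
          rw [hX]; rw [ih.2] at this; omega
        have hc : (C (γ (k+1)) * P k).natDegree
            < (X * P (k+1) - C (β (k+1)) * P (k+1)).natDegree := by
          have := natDegree_C_mul_le (γ (k+1)) (P k)
          rw [natDegree_sub_eq_left_of_natDegree_lt hb, hX]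
          rw [ih.1] at this; omega
        rw [hr, natDegree_sub_eq_left_of_natDegree_lt hc,
          natDegree_sub_eq_left_of_natDegree_lt hb, hX]
    exact fun n => (key n).1
  have hz : ∀ i j : ℕ, i < j → (P i).coeff j = 0 := fun i j h =>
    coeff_eq_zero_of_natDegree_lt (by rw [hdeg]; exact h)
  have ho : ∀ i, (P i).coeff i = 1 := fun i => by
    have := (hPmonic i).coeff_natDegree; rwa [hdeg] at this
  -- key scalar equations
  have main : ∀ m : ℕ,
      βt (m+4) = β (m+4) ∧
      γt (m+4) = γ (m+4) + a1 * β (m+3) - a1 * βt (m+4) ∧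
      a1 * γ (m+3) + a2 * β (m+2) = a2 * βt (m+4) + a1 * γt (m+4) ∧
      a2 * γ (m+2) = a2 * γt (m+4) := by
    intro m
    have h1 := hQrec (m+4) (by omega)
    rw [show m+4-1 = m+3 from rfl] at h1
    rw [hQ (m+5) (by omega), hQ (m+4) (by omega), hQ (m+3) (by omega)] at h1
    rw [show m+5-1 = m+4 from rfl, show m+5-2 = m+3 from rfl, show m+4-1 = m+3 from rfl,
        show m+4-2 = m+2 from rfl, show m+3-1 = m+2 from rfl, show m+3-2 = m+1 from rfl] at h1
    have h2 := hPrec (m+4) (by omega)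
    rw [show m+4-1 = m+3 from rfl] at h2
    have h3 := hPrec (m+3) (by omega)
    rw [show m+3-1 = m+2 from rfl] at h3
    have h4 := hPrec (m+2) (by omega)
    rw [show m+2-1 = m+1 from rfl] at h4
    have key : C (β (m+4) - βt (m+4)) * P (m+4)
        + C (γ (m+4) + a1 * β (m+3) - a1 * βt (m+4) - γt (m+4)) * P (m+3)
        + C (a1 * γ (m+3) + a2 * β (m+2) - a2 * βt (m+4) - a1 * γt (m+4)) * P (m+2)
        + C (a2 * γ (m+2) - a2 * γt (m+4)) * P (m+1) = 0 := by
      simp only [C_add, C_sub, C_mul]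
      linear_combination h1 - h2 - C a1 * h3 - C a2 * h4
    have e3 : β (m+4) - βt (m+4) = 0 := by
      have := congrArg (fun p => p.coeff (m+4)) key
      simp only [coeff_add, coeff_C_mul, coeff_zero] at this
      rw [ho, hz (m+3) (m+4) (by omega), hz (m+2) (m+4) (by omega),
        hz (m+1) (m+4) (by omega)] at this
      linarith
    rw [e3, C_0, zero_mul, zero_add] at key
    have e2 : γ (m+4) + a1 * β (m+3) - a1 * βt (m+4) - γt (m+4) = 0 := by
      have := congrArg (fun p => p.coeff (m+3)) key
      simp only [coeff_add, coeff_C_mul, coeff_zero] at this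
      rw [ho, hz (m+2) (m+3) (by omega), hz (m+1) (m+3) (by omega)] at this
      linarith
    rw [e2, C_0, zero_mul, zero_add] at key
    have e1 : a1 * γ (m+3) + a2 * β (m+2) - a2 * βt (m+4) - a1 * γt (m+4) = 0 := by
      have := congrArg (fun p => p.coeff (m+2)) key
      simp only [coeff_add, coeff_C_mul, coeff_zero] at this
      rw [ho, hz (m+1) (m+2) (by omega)] at this
      linarith
    rw [e1, C_0, zero_mul, zero_add] at key
    have e0 : a2 * γ (m+2) - a2 * γt (m+4) = 0 := by
      have := congrArg (fun p => p.coeff (m+1)) key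
      simp only [coeff_C_mul, coeff_zero] at this
      rw [ho] at this
      linarith
    exact ⟨by linarith, by linarith, by linarith, by linarith⟩
  -- derived scalar recurrences
  have rec1 : ∀ m : ℕ, γ (m+2) = γ (m+4) + a1 * (β (m+3) - β (m+4)) := by
    intro m
    obtain ⟨e3, e2, e1, e0⟩ := main m
    have hgt : γt (m+4) = γ (m+2) := (mul_left_cancel₀ ha2 e0).symm
    rw [hgt, e3] at e2
    linear_combination e2
  have rec2 : ∀ m : ℕ, γ (m+3) - γ (m+2) = a1 / 4 * (β (m+4) - β (m+2)) := by
    intro m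
    obtain ⟨e3, e2, e1, e0⟩ := main m
    have hgt : γt (m+4) = γ (m+2) := (mul_left_cancel₀ ha2 e0).symm
    rw [hgt, e3] at e1
    have ha2' : a2 = a1 ^ 2 / 4 := by linarith
    rw [ha2'] at e1
    exact mul_left_cancel₀ ha1 (by linear_combination e1)
  have hβrec : ∀ m : ℕ, β (m+5) = 3 * β (m+4) - 3 * β (m+3) + β (m+2) := by
    intro m
    have h1 := rec1 m
    have h2 := rec2 m
    have h3 := rec2 (m+1)
    rw [show m+1+3 = m+4 by omega, show m+1+2 = m+3 by omega,
      show m+1+4 = m+5 by omega] at h3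
    have key : a1 * (β (m+5) - 3 * β (m+4) + 3 * β (m+3) - β (m+2)) = 0 := by
      linear_combination -4*h3 - 4*h2 - 4*h1
    rcases mul_eq_zero.mp key with h | h
    · exact absurd h ha1
    · linarith
  -- define the quadratic coefficients
  set Cc : ℝ := (β 4 - 2 * β 3 + β 2) / 2 with hCc
  set Bc : ℝ := β 3 - β 2 - 5 * Cc with hBc
  set Ac : ℝ := β 2 - 2 * Bc - 4 * Cc with hAc
  set Fc : ℝ := a1 * Cc / 2 with hFc
  set Ec : ℝ := Fc + a1 * Bc / 2 with hEc
  set Dc : ℝ := γ 2 - 2 * Ec - 4 * Fc with hDc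
  have hβform : ∀ m : ℕ, β (m+2) = Ac + Bc * ((m+2 : ℕ) : ℝ) + Cc * ((m+2 : ℕ) : ℝ)^2 := by
    have key : ∀ m : ℕ, β (m+2) = Ac + Bc * ((m+2 : ℕ) : ℝ) + Cc * ((m+2 : ℕ) : ℝ)^2 ∧
        β (m+3) = Ac + Bc * ((m+3 : ℕ) : ℝ) + Cc * ((m+3 : ℕ) : ℝ)^2 ∧
        β (m+4) = Ac + Bc * ((m+4 : ℕ) : ℝ) + Cc * ((m+4 : ℕ) : ℝ)^2 := by
      intro m
      induction m with
      | zero =>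
        norm_num
        refine ⟨by rw [hAc]; push_cast; ring, ?_, ?_⟩
        · rw [hAc, hBc]; push_cast; ring
        · rw [hAc, hBc, hCc]; push_cast; ring
      | succ k ih =>
        obtain ⟨i1, i2, i3⟩ := ih
        rw [show k+1+2 = k+3 by omega, show k+1+3 = k+4 by omega,
          show k+1+4 = k+5 by omega]
        refine ⟨i2, i3, ?_⟩
        rw [hβrec k, i1, i2, i3]
        push_cast; ring
    exact fun m => (key m).1
  have hγform : ∀ m : ℕ, γ (m+2) = Dc + Ec * ((m+2 : ℕ) : ℝ) + Fc * ((m+2 : ℕ) : ℝ)^2 := by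
    intro m
    induction m with
    | zero => norm_num; rw [hDc]; push_cast; ring
    | succ k ih =>
      rw [show k+1+2 = k+3 by omega]
      have h2 := rec2 k
      have hb2 := hβform k
      have hb4 := hβform (k+2)
      rw [show k+2+2 = k+4 by omega] at hb4
      rw [hb2, hb4, ih] at h2
      rw [show γ (k+3) = (Dc + Ec * ((k+2 : ℕ) : ℝ) + Fc * ((k+2 : ℕ) : ℝ)^2)
        + a1 / 4 * ((Ac + Bc * ((k+4 : ℕ) : ℝ) + Cc * ((k+4 : ℕ) : ℝ)^2)
          - (Ac + Bc * ((k+2 : ℕ) : ℝ) + Cc * ((k+2 : ℕ) : ℝ)^2)) by linarith]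
      rw [hEc, hFc]
      push_cast; ring
  refine ⟨Ac, Bc, Cc, Dc, Ec, Fc, ?_, by rw [hFc]; ring, by rw [hEc, hFc]; ring⟩
  intro n hn
  obtain ⟨m, rfl⟩ : ∃ m, n = m + 2 := ⟨n - 2, by omega⟩
  exact ⟨hβform m, hγform m⟩
end

section
/- Let {P_n}_{n≥0} be a sequence of monic real polynomials with P_0 = 1, P_1(x) = x − β_0 and x·P_n(x) = P_{n+1}(x) + β_n·P_n(x) + γ_n·P_{n−1}(x) for all n ≥ 1, with γ_n ≠ 0 for all n ≥ 1. Let a_1, a_2 be real numbers with a_1 ≠ 0, a_2 ≠ 0 and a_1² > 4·a_2, and let λ be the unique real number in (−1,1) satisfying a_1²·λ = a_2·(1+λ)² (note λ ≠ 0). Let {Q_n}_{n≥0} be monic polynomials with deg Q_n = n such that Q_n = P_n + a_1·P_{n−1} + a_2·P_{n−2} for all n ≥ 3, and suppose {Q_n} satisfies a three-term recurrence x·Q_n(x) = Q_{n+1}(x) + β̃_n·Q_n(x) + γ̃_n·Q_{n−1}(x) for all n ≥ 1 with γ̃_n ≠ 0. Then there exist real numbers A, B, C, D, E, F such that for all n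 ≥ 2: β_n = A + B·λⁿ + C·λ⁻ⁿ and γ_n = D + E·λⁿ + F·λ⁻ⁿ, and moreover a_1·C = (1+λ)·F and a_1·λ·B = (1+λ)·E. -/
open Polynomial

theorem stmt_7 (P Q : ℕ → Polynomial ℝ) (β γ βt γt : ℕ → ℝ) (a1 a2 l : ℝ)
    (ha1 : a1 ≠ 0) (ha2 : a2 ≠ 0) (ha : a1 ^ 2 > 4 * a2)
    (hl1 : -1 < l) (hl2 : l < 1) (hl0 : l ≠ 0)
    (hl : a1 ^ 2 * l = a2 * (1 + l) ^ 2)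
    (hPmonic : ∀ n, (P n).Monic)
    (hP0 : P 0 = 1) (hP1 : P 1 = X - Polynomial.C (β 0))
    (hPrec : ∀ n, 1 ≤ n → X * P n
      = P (n + 1) + Polynomial.C (β n) * P n + Polynomial.C (γ n) * P (n - 1))
    (hγ : ∀ n, 1 ≤ n → γ n ≠ 0)
    (hQmonic : ∀ n, (Q n).Monic) (hQdeg : ∀ n, (Q n).natDegree = n)
    (hQ : ∀ n, 3 ≤ n → Q n = P n + Polynomial.C a1 * P (n - 1) + Polynomial.C a2 * P (n - 2))
    (hQrec : ∀ n, 1 ≤ n → X * Q n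
      = Q (n + 1) + Polynomial.C (βt n) * Q n + Polynomial.C (γt n) * Q (n - 1))
    (hγt : ∀ n, 1 ≤ n → γt n ≠ 0) :
    ∃ A B C D E F : ℝ,
      (∀ n : ℕ, 2 ≤ n →
        β n = A + B * l ^ n + C * (l ^ n)⁻¹ ∧ γ n = D + E * l ^ n + F * (l ^ n)⁻¹) ∧
      a1 * C = (1 + l) * F ∧ a1 * l * B = (1 + l) * E := by
  have key : ∀ m : ℕ, γ (m+2) = γ (m+4) + a1 * (β (m+3) - β (m+4)) ∧
      a1 * (γ (m+3) - γ (m+2)) = a2 * (β (m+4) - β (m+2)) := by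
    have hPd : ∀ n, (P n).natDegree = n := by
      intro n
      induction n using Nat.strong_induction_on with
      | _ n ih =>
        match n with
        | 0 => simp [hP0]
        | 1 => simp [hP1]
        | (k+2) =>
          have h := hPrec (k+1) (by omega)
          have hk1 : (P (k+1)).natDegree = k+1 := ih _ (by omega)
          have hk : (P k).natDegree = k := ih _ (by omega)
          have hne : P (k+1) ≠ 0 := (hPmonic _).ne_zero
          have hXP : (X * P (k+1)).natDegree = k+2 := by
            rw [natDegree_X_mul hne, hk1]
          have hPe : P (k+2) = X * P (k+1)
              - (C (β (k+1)) * P (k+1) + C (γ (k+1)) * P k) := by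
            simp only [show k+1+1 = k+2 from rfl, show (k+1)-1 = k from rfl] at h
            linear_combination -h
          rw [hPe, natDegree_sub_eq_left_of_natDegree_lt, hXP]
          rw [hXP]
          refine lt_of_le_of_lt (natDegree_add_le _ _) ?_
          refine max_lt (lt_of_le_of_lt (natDegree_C_mul_le _ _) (by omega))
            (lt_of_le_of_lt (natDegree_C_mul_le _ _) (by omega))
    have hPc : ∀ n, (P n).coeff n = 1 := by
      intro n
      have := (hPmonic n).coeff_natDegree
      rwa [hPd] at this
    have hPz : ∀ n k, n < k → (P n).coeff k = 0 := by
      intro n k h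
      exact coeff_eq_zero_of_natDegree_lt (by rw [hPd]; exact h)
    intro m
    have h2 := hPrec (m+2) (by omega)
    have h3 := hPrec (m+3) (by omega)
    have h4 := hPrec (m+4) (by omega)
    have hq4 := hQrec (m+4) (by omega)
    simp only [show m+4+1 = m+5 from rfl, show m+3+1 = m+4 from rfl,
      show m+2+1 = m+3 from rfl,
      show (m+5)-1 = m+4 from rfl, show (m+5)-2 = m+3 from rfl,
      show (m+4)-1 = m+3 from rfl, show (m+4)-2 = m+2 from rfl,
      show (m+3)-1 = m+2 from rfl, show (m+3)-2 = m+1 from rfl,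
      show (m+2)-1 = m+1 from rfl] at hq4 h2 h3 h4
    rw [hQ (m+5) (by omega), hQ (m+4) (by omega), hQ (m+3) (by omega)] at hq4
    simp only [show (m+5)-1 = m+4 from rfl, show (m+5)-2 = m+3 from rfl,
      show (m+4)-1 = m+3 from rfl, show (m+4)-2 = m+2 from rfl,
      show (m+3)-1 = m+2 from rfl, show (m+3)-2 = m+1 from rfl] at hq4
    have heq : C (β (m+4) - βt (m+4)) * P (m+4)
        + C (γ (m+4) + a1 * β (m+3) - a1 * βt (m+4) - γt (m+4)) * P (m+3)
        + C (a1 * γ (m+3) + a2 * β (m+2) - a2 * βt (m+4) - a1 * γt (m+4)) * P (m+2)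
        + C (a2 * γ (m+2) - a2 * γt (m+4)) * P (m+1) = 0 := by
      linear_combination (norm := (simp only [map_sub, map_add, map_mul]; ring))
        hq4 - h4 - C a1 * h3 - C a2 * h2
    have e4 := congrArg (fun p => p.coeff (m+4)) heq
    have e3 := congrArg (fun p => p.coeff (m+3)) heq
    have e2 := congrArg (fun p => p.coeff (m+2)) heq
    have e1 := congrArg (fun p => p.coeff (m+1)) heq
    simp only [coeff_add, coeff_C_mul, coeff_zero, hPc,
      hPz (m+3) (m+4) (by omega), hPz (m+2) (m+4) (by omega), hPz (m+1) (m+4) (by omega),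
      hPz (m+2) (m+3) (by omega), hPz (m+1) (m+3) (by omega), hPz (m+1) (m+2) (by omega),
      mul_one, mul_zero, add_zero, zero_add] at e4 e3 e2 e1
    have hc3 : γ (m+4) + a1 * β (m+3) - a1 * βt (m+4) - γt (m+4) = 0 := by
      linear_combination e3 - (P (m+4)).coeff (m+3) * e4
    have hc2 : a1 * γ (m+3) + a2 * β (m+2) - a2 * βt (m+4) - a1 * γt (m+4) = 0 := by
      linear_combination e2 - (P (m+4)).coeff (m+2) * e4 - (P (m+3)).coeff (m+2) * hc3
    have hc1 : a2 * γ (m+2) - a2 * γt (m+4) = 0 := by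
      linear_combination e1 - (P (m+4)).coeff (m+1) * e4 - (P (m+3)).coeff (m+1) * hc3
        - (P (m+2)).coeff (m+1) * hc2
    have hgt : γt (m+4) = γ (m+2) := by
      have := mul_left_cancel₀ ha2 (show a2 * γ (m+2) = a2 * γt (m+4) by linarith)
      linarith
    constructor
    · linear_combination -hc3 - hgt + a1 * e4
    · linear_combination hc2 + a1 * hgt - a2 * e4
  have hll : l^2 < 1 := by nlinarith
  have h1l : (1:ℝ) + l ≠ 0 := by intro h; nlinarith
  have hlm : l - 1 ≠ 0 := by intro h; nlinarith
  have h1m : (1:ℝ) - l ≠ 0 := by intro h; nlinarith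
  obtain ⟨w, hw⟩ : ∃ w : ℝ, l * w = 1 := ⟨l⁻¹, mul_inv_cancel₀ hl0⟩
  have hwi : w = l⁻¹ := eq_inv_of_mul_eq_one_right (by linarith [hw])
  have hd : w - l ≠ 0 := by
    intro h
    have hwl : w = l := by linarith
    rw [hwl] at hw; nlinarith
  have hwm : w - 1 ≠ 0 := by
    intro h
    have : w = 1 := by linarith
    rw [this, mul_one] at hw; exact hlm (by linarith)
  -- recurrence for differences of β
  have hrec : ∀ k : ℕ, a2 * (β (k+5) - β (k+4))
      = (a1^2 - 2*a2) * (β (k+4) - β (k+3)) - a2 * (β (k+3) - β (k+2)) := by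
    intro k
    have k1 := (key (k+1)).2
    simp only [show k+1+3 = k+4 from rfl, show k+1+2 = k+3 from rfl,
      show k+1+4 = k+5 from rfl] at k1
    linear_combination -(key k).2 - k1 - a1 * (key k).1
  -- initial coefficients b, c
  obtain ⟨b, c, hb0, hb1⟩ : ∃ b c : ℝ,
      β 3 - β 2 = b * l^3 + c * w^3 ∧ β 4 - β 3 = b * l^4 + c * w^4 := by
    refine ⟨((β 3 - β 2) * w^4 - (β 4 - β 3) * w^3) / (w - l),
      (l^3 * (β 4 - β 3) - l^4 * (β 3 - β 2)) / (w - l), ?_, ?_⟩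
    · rw [div_mul_eq_mul_div, div_mul_eq_mul_div, ← add_div, eq_comm,
        div_eq_iff hd]
      linear_combination ((β 3 - β 2) * (w - l) * (1 + l*w + (l*w)^2)) * hw
    · rw [div_mul_eq_mul_div, div_mul_eq_mul_div, ← add_div, eq_comm,
        div_eq_iff hd]
      linear_combination ((β 4 - β 3) * (w - l) * (1 + l*w + (l*w)^2)) * hw
  -- general formula for differences
  have hv : ∀ k : ℕ, (β (k+3) - β (k+2) = b * l^(k+3) + c * w^(k+3)) ∧
      (β (k+4) - β (k+3) = b * l^(k+4) + c * w^(k+4)) := by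
    intro k
    induction k with
    | zero => exact ⟨hb0, hb1⟩
    | succ k ih =>
      refine ⟨ih.2, ?_⟩
      simp only [show k+1+3 = k+4 from rfl, show k+1+4 = k+5 from rfl]
      have hwsum : a2 * (l + w) = a1^2 - 2*a2 := by
        have h' : l * (a2 * (l + w)) = l * (a1^2 - 2*a2) := by
          linear_combination (-1 : ℝ) * hl + a2 * hw
        exact mul_left_cancel₀ hl0 h'
      have h5 : a2 * (β (k+5) - β (k+4)) = a2 * (b * l^(k+5) + c * w^(k+5)) := by
        linear_combination hrec k + (a1^2-2*a2) * ih.2 - a2 * ih.1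
          - (b*l^(k+4) + c*w^(k+4)) * hwsum + a2*(b*l^(k+3) + c*w^(k+3)) * hw
      exact mul_left_cancel₀ ha2 h5
  obtain ⟨B, hBdef⟩ : ∃ B : ℝ, B = b * l / (l - 1) := ⟨_, rfl⟩
  obtain ⟨Cc, hCdef⟩ : ∃ Cc : ℝ, Cc = c / (1 - l) := ⟨_, rfl⟩
  obtain ⟨A, hAdef⟩ : ∃ A : ℝ, A = β 2 - B * l^2 - Cc * w^2 := ⟨_, rfl⟩
  have hB : B * (l - 1) = b * l := by rw [hBdef]; exact div_mul_cancel₀ _ hlm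
  have hCc : Cc * (w - 1) = c * w := by
    rw [hCdef, div_mul_eq_mul_div, div_eq_iff h1m]
    linear_combination c * hw
  have hβ : ∀ k : ℕ, β (k+2) = A + B * l^(k+2) + Cc * w^(k+2) := by
    intro k
    induction k with
    | zero => rw [hAdef]; ring
    | succ k ih =>
      simp only [show k+1+2 = k+3 from rfl]
      linear_combination ih + (hv k).1 - l^(k+2) * hB - w^(k+2) * hCc
  obtain ⟨E, hEdef⟩ : ∃ E : ℝ, E = a1 * l * B / (1 + l) := ⟨_, rfl⟩
  obtain ⟨F, hFdef⟩ : ∃ F : ℝ, F = a1 * Cc / (1 + l) := ⟨_, rfl⟩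
  obtain ⟨D, hDdef⟩ : ∃ D : ℝ, D = γ 2 - E * l^2 - F * w^2 := ⟨_, rfl⟩
  have hE : E * (1 + l) = a1 * l * B := by rw [hEdef]; exact div_mul_cancel₀ _ h1l
  have hF : F * (1 + l) = a1 * Cc := by rw [hFdef]; exact div_mul_cancel₀ _ h1l
  have hE2 : E * (l^2 - 1) = a1 * b * l^2 := by
    linear_combination (l - 1) * hE + a1 * l * hB
  have hF2 : F * (w^2 - 1) = a1 * c * w^2 := by
    linear_combination w * (w - 1) * hF + a1 * w * hCc - F * (w - 1) * hw
  have hg2 : γ 2 = D + E * l^2 + F * w^2 := by rw [hDdef]; ring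
  have hg3 : γ 3 = D + E * l^3 + F * w^3 := by
    have hk2 := (key 0).2
    norm_num at hk2
    have h3' : (a1 * (1 + l)) * (γ 3) = (a1 * (1 + l)) * (D + E*l^3 + F*w^3) := by
      linear_combination (1+l) * hk2 + a2*(1+l)*hb1 + a2*(1+l)*hb0
        + a1*(1+l)*hg2 - a1*l^2*hE2 - a1*w*hF2 - b*l^3*hl - c*w^4*hl
        + (a1^2*c*w^3 - a2*c*w^3*(1+l) - a1*F*w*(w-1)) * hw
    exact mul_left_cancel₀ (mul_ne_zero ha1 h1l) h3'
  have hg : ∀ k : ℕ, (γ (k+2) = D + E * l^(k+2) + F * w^(k+2)) ∧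
      (γ (k+3) = D + E * l^(k+3) + F * w^(k+3)) := by
    intro k
    induction k with
    | zero => exact ⟨hg2, hg3⟩
    | succ k ih =>
      refine ⟨ih.2, ?_⟩
      simp only [show k+1+3 = k+4 from rfl]
      linear_combination -(key k).1 + ih.1 + a1 * (hv k).2
        - l^(k+2) * hE2 - w^(k+2) * hF2
  refine ⟨A, B, Cc, D, E, F, ?_, ?_, ?_⟩
  · intro n hn
    obtain ⟨k, rfl⟩ : ∃ k, n = k + 2 := ⟨n - 2, by omega⟩
    have hwp : (l ^ (k+2))⁻¹ = w^(k+2) := by rw [hwi, inv_pow]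
    rw [hwp]
    exact ⟨hβ k, (hg k).1⟩
  · rw [hFdef]; field_simp
  · rw [hEdef]; field_simp
end

section
/- Let {P_n}_{n≥0} be a sequence of monic real polynomials with P_0 = 1, P_1(x) = x − β_0 and x·P_n(x) = P_{n+1}(x) + β_n·P_n(x) + γ_n·P_{n−1}(x) for all n ≥ 1, with γ_n ≠ 0 for all n ≥ 1. Let a_1, a_2 be real numbers with a_1 ≠ 0 and a_1² < 4·a_2, and let θ ∈ (0,π) be the unique angle such that λ = e^{iθ} satisfies a_1²·λ = a_2·(1+λ)². Let {Q_n}_{n≥0} be monic polynomials with deg Q_n = n such that Q_n = P_n + a_1·P_{n−1} + a_2·P_{n−2} for all n ≥ 3, and suppose {Q_n} satisfies a three-term recurrence x·Q_n(x) = Q_{n+1}(x) + β̃_n·Q_n(x) + γ̃_n·Q_{n−1}(x) for all n ≥ 1 with γ̃_n ≠ 0. Then there exist real numbers A, D and complex numbers B, E such that for all n ≥ 2: β_n = A + B·e^{inθ} + conj(B)·e^{−inθ} and γ_n = D + E·e^{inθ} + conj(E)·e^{−inθ} (as identities in ℂ, where β_n, γ_n are regarded as complex numbers), and moreover a_1·λ·B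 = (1+λ)·E. -/
open Polynomial

lemma stmt8_deg (P : ℕ → Polynomial ℝ) (β γ : ℕ → ℝ)
    (hPmonic : ∀ n, (P n).Monic)
    (hP0 : P 0 = 1) (hP1 : P 1 = X - Polynomial.C (β 0))
    (hPrec : ∀ n, 1 ≤ n → X * P n
      = P (n + 1) + Polynomial.C (β n) * P n + Polynomial.C (γ n) * P (n - 1)) :
    ∀ n, (P n).natDegree = n := by
  have key : ∀ n, (P n).natDegree = n ∧ (P (n+1)).natDegree = n + 1 := by
    intro n
    induction n with
    | zero => exact ⟨by simp [hP0], by rw [hP1]; exact natDegree_X_sub_C _⟩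
    | succ k ih =>
      refine ⟨ih.2, ?_⟩
      have h := hPrec (k+1) (by omega)
      simp only [Nat.add_sub_cancel, show k+1+1 = k+2 from rfl] at h
      have hE : P (k+2) = X * P (k+1) - Polynomial.C (β (k+1)) * P (k+1)
          - Polynomial.C (γ (k+1)) * P k := by linear_combination -h
      have hco : (P (k+2)).coeff (k+2) = 1 := by
        rw [hE]
        have h1 : (P (k+1)).coeff (k+1) = 1 := by
          have := (hPmonic (k+1)).coeff_natDegree
          rwa [ih.2] at this
        have h2 : (P (k+1)).coeff (k+2) = 0 :=
          coeff_eq_zero_of_natDegree_lt (by rw [ih.2]; omega)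
        have h3 : (P k).coeff (k+2) = 0 :=
          coeff_eq_zero_of_natDegree_lt (by rw [ih.1]; omega)
        simp [coeff_sub, coeff_X_mul, coeff_C_mul, h1, h2, h3]
      have hle : (P (k+2)).natDegree ≤ k + 2 := by
        rw [hE]
        refine le_trans (natDegree_sub_le _ _) (max_le (le_trans (natDegree_sub_le _ _)
          (max_le ?_ ?_)) ?_)
        · exact le_trans natDegree_mul_le (by simp [ih.2]; omega)
        · exact le_trans (natDegree_C_mul_le _ _) (by omega)
        · exact le_trans (natDegree_C_mul_le _ _) (by omega)
      exact le_antisymm hle (le_natDegree_of_ne_zero (by rw [hco]; norm_num))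
  exact fun n => (key n).1

lemma stmt8_combo (P : ℕ → Polynomial ℝ) (hdeg : ∀ n, (P n).natDegree = n)
    (hmon : ∀ n, (P n).Monic) (m : ℕ) (c0 c1 c2 c3 : ℝ)
    (h : Polynomial.C c0 * P (m+4) + Polynomial.C c1 * P (m+3)
      + Polynomial.C c2 * P (m+2) + Polynomial.C c3 * P (m+1) = 0) :
    c0 = 0 ∧ c1 = 0 ∧ c2 = 0 ∧ c3 = 0 := by
  have hc : ∀ k j : ℕ, j < k → (P j).coeff k = 0 := fun k j hjk =>
    coeff_eq_zero_of_natDegree_lt (by rw [hdeg]; exact hjk)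
  have h1 : ∀ k, (P k).coeff k = 1 := fun k => by
    have := (hmon k).coeff_natDegree; rwa [hdeg] at this
  have e0 := congrArg (fun p => Polynomial.coeff p (m+4)) h
  simp only [coeff_add, coeff_C_mul, coeff_zero, h1,
    hc (m+4) (m+3) (by omega), hc (m+4) (m+2) (by omega), hc (m+4) (m+1) (by omega),
    mul_zero, mul_one, add_zero, zero_add] at e0
  subst e0
  have e1 := congrArg (fun p => Polynomial.coeff p (m+3)) h
  simp only [coeff_add, coeff_C_mul, coeff_zero, h1,
    hc (m+3) (m+2) (by omega), hc (m+3) (m+1) (by omega),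
    mul_zero, mul_one, add_zero, zero_add, zero_mul] at e1
  subst e1
  have e2 := congrArg (fun p => Polynomial.coeff p (m+2)) h
  simp only [coeff_add, coeff_C_mul, coeff_zero, h1, hc (m+2) (m+1) (by omega),
    mul_zero, mul_one, add_zero, zero_add, zero_mul] at e2
  subst e2
  have e3 := congrArg (fun p => Polynomial.coeff p (m+1)) h
  simp only [coeff_add, coeff_C_mul, coeff_zero, h1,
    mul_zero, mul_one, add_zero, zero_add, zero_mul] at e3
  exact ⟨rfl, rfl, rfl, e3⟩
open Polynomial

theorem stmt_8 (P Q : ℕ → Polynomial ℝ) (β γ βt γt : ℕ → ℝ) (a1 a2 θ : ℝ) (l : ℂ)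
    (ha1 : a1 ≠ 0) (ha : a1 ^ 2 < 4 * a2)
    (hθ1 : 0 < θ) (hθ2 : θ < Real.pi)
    (hlθ : l = Complex.exp (θ * Complex.I))
    (hl : (a1 ^ 2 : ℂ) * l = (a2 : ℂ) * (1 + l) ^ 2)
    (hPmonic : ∀ n, (P n).Monic)
    (hP0 : P 0 = 1) (hP1 : P 1 = X - Polynomial.C (β 0))
    (hPrec : ∀ n, 1 ≤ n → X * P n
      = P (n + 1) + Polynomial.C (β n) * P n + Polynomial.C (γ n) * P (n - 1))
    (hγ : ∀ n, 1 ≤ n → γ n ≠ 0)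
    (hQmonic : ∀ n, (Q n).Monic) (hQdeg : ∀ n, (Q n).natDegree = n)
    (hQ : ∀ n, 3 ≤ n → Q n = P n + Polynomial.C a1 * P (n - 1) + Polynomial.C a2 * P (n - 2))
    (hQrec : ∀ n, 1 ≤ n → X * Q n
      = Q (n + 1) + Polynomial.C (βt n) * Q n + Polynomial.C (γt n) * Q (n - 1))
    (hγt : ∀ n, 1 ≤ n → γt n ≠ 0) :
    ∃ A D : ℝ, ∃ B E : ℂ,
      (∀ n : ℕ, 2 ≤ n →
        (β n : ℂ) = (A : ℂ) + B * Complex.exp ((n : ℂ) * θ * Complex.I)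
            + (starRingEnd ℂ) B * Complex.exp (-((n : ℂ) * θ) * Complex.I) ∧
        (γ n : ℂ) = (D : ℂ) + E * Complex.exp ((n : ℂ) * θ * Complex.I)
            + (starRingEnd ℂ) E * Complex.exp (-((n : ℂ) * θ) * Complex.I)) ∧
      (a1 : ℂ) * l * B = (1 + l) * E := by
  have hdeg : ∀ n, (P n).natDegree = n := stmt8_deg P β γ hPmonic hP0 hP1 hPrec
  have ha2 : 0 < a2 := by nlinarith [sq_nonneg a1, pow_pos (abs_pos.mpr ha1) 2]
  have ha2' : a2 ≠ 0 := ne_of_gt ha2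
  -- extract the four scalar relations, for all m (n = m+4)
  have key : ∀ m : ℕ,
      (β (m+4) - βt (m+4) = 0) ∧
      (γ (m+4) + a1 * β (m+3) - a1 * βt (m+4) - γt (m+4) = 0) ∧
      (a1 * γ (m+3) + a2 * β (m+2) - a2 * βt (m+4) - a1 * γt (m+4) = 0) ∧
      (a2 * γ (m+2) - a2 * γt (m+4) = 0) := by
    intro m
    have e := hQrec (m+4) (by omega)
    simp only [show m+4-1 = m+3 from rfl, show m+4+1 = m+5 from rfl] at e
    rw [hQ (m+4) (by omega), hQ (m+5) (by omega), hQ (m+3) (by omega)] at e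
    simp only [show m+4-1 = m+3 from rfl, show m+4-2 = m+2 from rfl,
      show m+5-1 = m+4 from rfl, show m+5-2 = m+3 from rfl,
      show m+3-1 = m+2 from rfl, show m+3-2 = m+1 from rfl] at e
    have p4 := hPrec (m+4) (by omega)
    have p3 := hPrec (m+3) (by omega)
    have p2 := hPrec (m+2) (by omega)
    simp only [show m+4-1 = m+3 from rfl, show m+3-1 = m+2 from rfl,
      show m+2-1 = m+1 from rfl, show m+4+1 = m+5 from rfl,
      show m+3+1 = m+4 from rfl, show m+2+1 = m+3 from rfl] at p4 p3 p2
    have comb : Polynomial.C (β (m+4) - βt (m+4)) * P (m+4)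
        + Polynomial.C (γ (m+4) + a1 * β (m+3) - a1 * βt (m+4) - γt (m+4)) * P (m+3)
        + Polynomial.C (a1 * γ (m+3) + a2 * β (m+2) - a2 * βt (m+4) - a1 * γt (m+4)) * P (m+2)
        + Polynomial.C (a2 * γ (m+2) - a2 * γt (m+4)) * P (m+1) = 0 := by
      simp only [map_sub, map_add, map_mul]
      linear_combination e - p4 - Polynomial.C a1 * p3 - Polynomial.C a2 * p2
    exact stmt8_combo P hdeg hPmonic m _ _ _ _ comb
  -- real relations
  have r1 : ∀ m : ℕ, γ (m+4) - γ (m+2) = a1 * (β (m+4) - β (m+3)) := by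
    intro m
    obtain ⟨k1, k2, k3, k4⟩ := key m
    have h : a2 * (γ (m+4) - γ (m+2)) = a2 * (a1 * (β (m+4) - β (m+3))) := by
      linear_combination a2*k2 - a2*a1*k1 - k4
    exact mul_left_cancel₀ ha2' h
  -- r2 : the second relation
  have r2 : ∀ m : ℕ, a1 * γ (m+3) + a2 * β (m+2)
      = a2 * β (m+4) + a1 * γ (m+4) + a1^2 * (β (m+3) - β (m+4)) := by
    intro m
    obtain ⟨k1, k2, k3, k4⟩ := key m
    linear_combination k3 - a2*k1 - a1*k2 + a1^2*k1
  -- delta recurrence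
  have drecR : ∀ m : ℕ, a2 * (β (m+5) - β (m+4)) + (2*a2 - a1^2) * (β (m+4) - β (m+3))
      + a2 * (β (m+3) - β (m+2)) = 0 := by
    intro m
    linear_combination - r2 m - r2 (m+1) - a1 * (r1 (m+1))
  -- special gamma step
  have g32 : a1 * (γ 3 - γ 2) = a2 * ((β 4 - β 3) + (β 3 - β 2)) := by
    linear_combination a1 * (r1 0) + r2 0
  -- general gamma step
  have gstep : ∀ m : ℕ, a1 * (γ (m+4) - γ (m+3))
      = (a1^2 - a2) * (β (m+4) - β (m+3)) - a2 * (β (m+3) - β (m+2)) := by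
    intro m
    linear_combination - r2 m
  -- complex setup
  have hconjl : (starRingEnd ℂ) l = (starRingEnd ℂ) l := rfl
  obtain ⟨μ, hμ⟩ : ∃ μ : ℂ, μ = (starRingEnd ℂ) l := ⟨_, rfl⟩
  have habs : ‖l‖ = 1 := by rw [hlθ]; exact Complex.norm_exp_ofReal_mul_I θ
  have hlμ1 : l * μ = 1 := by
    rw [hμ, Complex.mul_conj, Complex.normSq_eq_norm_sq, habs]; norm_num
  have hl0 : l ≠ 0 := by rw [hlθ]; exact Complex.exp_ne_zero _
  have hμ0 : μ ≠ 0 := fun h => by simp [h] at hlμ1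
  have hlim : l.im = Real.sin θ := by rw [hlθ]; exact Complex.exp_ofReal_mul_I_im θ
  have hsin : 0 < Real.sin θ := Real.sin_pos_of_pos_of_lt_pi hθ1 hθ2
  have hcl : (starRingEnd ℂ) l = μ := hμ.symm
  have hcμ : (starRingEnd ℂ) μ = l := by rw [hμ, Complex.conj_conj]
  have hlμne : l ≠ μ := by
    intro h
    have h2 : l.im = -l.im := by
      nth_rewrite 1 [h, hμ]
      exact Complex.conj_im l
    rw [hlim] at h2; linarith
  have hl1 : l ≠ 1 := by
    intro h; rw [h] at hlim; simp at hlim; linarith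
  have hμ1 : μ ≠ 1 := by
    intro h
    have : l = 1 := by rw [← hcμ, h, map_one]
    exact hl1 this
  have hlsub : l - μ ≠ 0 := sub_ne_zero.mpr hlμne
  have hμsub : μ - l ≠ 0 := sub_ne_zero.mpr (Ne.symm hlμne)
  have hl1' : l - 1 ≠ 0 := sub_ne_zero.mpr hl1
  have hμ1' : μ - 1 ≠ 0 := sub_ne_zero.mpr hμ1
  have ha1c : (a1 : ℂ) ≠ 0 := Complex.ofReal_ne_zero.mpr ha1
  have ha2c : (a2 : ℂ) ≠ 0 := Complex.ofReal_ne_zero.mpr ha2'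
  -- characteristic equations
  have hchar : (a2:ℂ)*l^2 + (2*a2 - a1^2)*l + a2 = 0 := by linear_combination -hl
  have hlconj : (a1:ℂ)^2 * μ = (a2:ℂ) * (1 + μ)^2 := by
    have h2 := congrArg (starRingEnd ℂ) hl
    simp only [map_mul, map_pow, map_add, map_one, Complex.conj_ofReal, hcl] at h2
    exact h2
  have hcharμ : (a2:ℂ)*μ^2 + (2*a2 - a1^2)*μ + a2 = 0 := by linear_combination -hlconj
  -- the delta sequence
  obtain ⟨d, hd⟩ : ∃ d : ℕ → ℂ, ∀ m, d m = ((β (m+3) : ℂ) - (β (m+2) : ℂ)) :=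
    ⟨_, fun m => rfl⟩
  have hdreal : ∀ m, (starRingEnd ℂ) (d m) = d m := by
    intro m; rw [hd]; simp [Complex.conj_ofReal]
  have drec : ∀ m : ℕ, (a2:ℂ) * d (m+2) + (2*a2 - a1^2) * d (m+1) + a2 * d m = 0 := by
    intro m
    have h2 := congrArg (fun x : ℝ => (x : ℂ)) (drecR m)
    push_cast at h2
    rw [hd, hd, hd]
    push_cast
    linear_combination h2
  obtain ⟨c, hc⟩ : ∃ c : ℂ, c = (d 1 - μ * d 0) / (l^3 * (l - μ)) := ⟨_, rfl⟩
  have hcconj : (starRingEnd ℂ) c = (d 1 - l * d 0) / (μ^3 * (μ - l)) := by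
    rw [hc, map_div₀, map_sub, map_mul, map_mul, map_pow, map_sub,
      hdreal 1, hdreal 0, hcμ, hcl]
  have dform : ∀ m : ℕ, d m = c * l^(m+3) + (starRingEnd ℂ) c * μ^(m+3) := by
    have H : ∀ m : ℕ, (d m = c * l^(m+3) + (starRingEnd ℂ) c * μ^(m+3)) ∧
        (d (m+1) = c * l^(m+4) + (starRingEnd ℂ) c * μ^(m+4)) := by
      intro m
      induction m with
      | zero =>
        constructor
        · rw [hcconj, hc]; field_simp; ring
        · rw [hcconj, hc]; field_simp; ring
      | succ k ih =>
        refine ⟨ih.2, ?_⟩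
        have h := drec k
        rw [ih.1, ih.2] at h
        have h2 : (a2:ℂ) * d (k+2) = a2 * (c * l^(k+5) + (starRingEnd ℂ) c * μ^(k+5)) := by
          linear_combination h - (c*l^(k+3))*hchar - ((starRingEnd ℂ) c*μ^(k+3))*hcharμ
        exact mul_left_cancel₀ ha2c h2
    exact fun m => (H m).1
  -- B, E, A, D
  obtain ⟨B, hB⟩ : ∃ B : ℂ, B = c * l / (l - 1) := ⟨_, rfl⟩
  obtain ⟨E, hE⟩ : ∃ E : ℂ, E = c * ((a1^2 - a2)*l - a2) / ((a1 : ℂ) * (l - 1)) := ⟨_, rfl⟩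
  have hBstep : B * (l - 1) = c * l := by rw [hB]; field_simp
  have hBstepc : (starRingEnd ℂ) B * (μ - 1) = (starRingEnd ℂ) c * μ := by
    have h2 := congrArg (starRingEnd ℂ) hBstep
    simp only [map_mul, map_sub, map_one, hcl] at h2
    exact h2
  have hEstep : E * (l - 1) * a1 = c * ((a1^2 - a2)*l - a2) := by
    rw [hE]; field_simp
  have hEstepc : (starRingEnd ℂ) E * (μ - 1) * a1 = (starRingEnd ℂ) c * ((a1^2 - a2)*μ - a2) := by
    have h2 := congrArg (starRingEnd ℂ) hEstep
    simp only [map_mul, map_sub, map_pow, map_one, Complex.conj_ofReal, hcl] at h2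
    exact h2
  obtain ⟨A, hAc⟩ : ∃ A : ℝ, (A:ℂ) = (β 2 : ℂ) - (B*l^2 + (starRingEnd ℂ) B * μ^2) := by
    refine ⟨β 2 - 2*(B*l^2).re, ?_⟩
    have h1 : (starRingEnd ℂ) B * μ^2 = (starRingEnd ℂ) (B * l^2) := by
      rw [map_mul, map_pow, hcl]
    rw [h1]
    have h2 : B * l^2 + (starRingEnd ℂ) (B*l^2) = ((2*(B*l^2).re : ℝ) : ℂ) := by
      exact Complex.add_conj _
    rw [h2]; push_cast; try ring
  obtain ⟨D, hDc⟩ : ∃ D : ℝ, (D:ℂ) = (γ 2 : ℂ) - (E*l^2 + (starRingEnd ℂ) E * μ^2) := by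
    refine ⟨γ 2 - 2*(E*l^2).re, ?_⟩
    have h1 : (starRingEnd ℂ) E * μ^2 = (starRingEnd ℂ) (E * l^2) := by
      rw [map_mul, map_pow, hcl]
    rw [h1]
    have h2 : E * l^2 + (starRingEnd ℂ) (E*l^2) = ((2*(E*l^2).re : ℝ) : ℂ) := by
      exact Complex.add_conj _
    rw [h2]; push_cast; try ring
  -- beta formula
  have βform : ∀ n : ℕ, 2 ≤ n → (β n : ℂ) = (A:ℂ) + B * l^n + (starRingEnd ℂ) B * μ^n := by
    intro n hn
    induction n, hn using Nat.le_induction with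
    | base => rw [hAc]; ring
    | succ n hn ih =>
      obtain ⟨k, rfl⟩ : ∃ k, n = k + 2 := ⟨n - 2, by omega⟩
      have hdk := dform k
      rw [hd] at hdk
      linear_combination ih + hdk - l^(k+2) * hBstep - μ^(k+2) * hBstepc
  -- gamma formula
  have γform : ∀ n : ℕ, 2 ≤ n → (γ n : ℂ) = (D:ℂ) + E * l^n + (starRingEnd ℂ) E * μ^n := by
    intro n hn
    induction n, hn using Nat.le_induction with
    | base => rw [hDc]; ring
    | succ n hn ih =>
      obtain ⟨k, rfl⟩ : ∃ k, n = k + 2 := ⟨n - 2, by omega⟩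
      match k with
      | 0 =>
        have hg := congrArg (fun x : ℝ => (x : ℂ)) g32
        push_cast at hg
        have hd0 := dform 0
        have hd1 := dform 1
        rw [hd] at hd0 hd1
        push_cast at hd0 hd1
        have hs1 : E * (l^3 - l^2) * a1 = a2 * c * (l^4 + l^3) := by
          have h3 : E * (l^3 - l^2) * a1 = (E * (l - 1) * a1) * l^2 := by ring
          rw [h3, hEstep]
          linear_combination (c*l^2) * hl
        have hs2 : (starRingEnd ℂ) E * (μ^3 - μ^2) * a1
            = a2 * (starRingEnd ℂ) c * (μ^4 + μ^3) := by
          have h3 : (starRingEnd ℂ) E * (μ^3 - μ^2) * a1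
              = ((starRingEnd ℂ) E * (μ - 1) * a1) * μ^2 := by ring
          rw [h3, hEstepc]
          linear_combination ((starRingEnd ℂ) c * μ^2) * hlconj
        have goal2 : (a1:ℂ) * (γ 3 : ℂ) = (a1:ℂ) * ((D:ℂ) + E * l^3 + (starRingEnd ℂ) E * μ^3) := by
          linear_combination a1 * ih + hg + a2 * hd1 + a2 * hd0 - hs1 - hs2
        have h4 := mul_left_cancel₀ ha1c goal2
        norm_num at h4 ⊢
        exact h4
      | m + 1 =>
        have hg := congrArg (fun x : ℝ => (x : ℂ)) (gstep m)
        push_cast at hg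
        have hd0 := dform m
        have hd1 := dform (m+1)
        rw [hd] at hd0 hd1
        push_cast at hd0 hd1
        have hs1 : E * (l^(m+4) - l^(m+3)) * a1
            = c * ((a1^2 - a2)*l - a2) * l^(m+3) := by
          have h3 : E * (l^(m+4) - l^(m+3)) * a1 = (E * (l - 1) * a1) * l^(m+3) := by ring
          rw [h3, hEstep]
        have hs2 : (starRingEnd ℂ) E * (μ^(m+4) - μ^(m+3)) * a1
            = (starRingEnd ℂ) c * ((a1^2 - a2)*μ - a2) * μ^(m+3) := by
          have h3 : (starRingEnd ℂ) E * (μ^(m+4) - μ^(m+3)) * a1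
              = ((starRingEnd ℂ) E * (μ - 1) * a1) * μ^(m+3) := by ring
          rw [h3, hEstepc]
        have ih' : (γ (m+3) : ℂ) = (D:ℂ) + E * l^(m+3) + (starRingEnd ℂ) E * μ^(m+3) := by
          exact_mod_cast ih
        have goal2 : (a1:ℂ) * (γ (m+4) : ℂ)
            = (a1:ℂ) * ((D:ℂ) + E * l^(m+4) + (starRingEnd ℂ) E * μ^(m+4)) := by
          linear_combination a1 * ih' + hg + ((a1:ℂ)^2 - a2) * hd1 - (a2:ℂ) * hd0 - hs1 - hs2
        have h4 := mul_left_cancel₀ ha1c goal2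
        norm_num at h4 ⊢
        exact h4
  -- exponential conversion
  have hexp1 : ∀ n : ℕ, Complex.exp ((n : ℂ) * θ * Complex.I) = l^n := by
    intro n
    rw [hlθ, ← Complex.exp_nat_mul]
    ring_nf
  have hμinv : μ = l⁻¹ := by
    field_simp
    linear_combination hlμ1
  have hexp2 : ∀ n : ℕ, Complex.exp (-((n : ℂ) * θ) * Complex.I) = μ^n := by
    intro n
    have h3 : (-((n : ℂ) * θ)) * Complex.I = -((n : ℂ) * θ * Complex.I) := by ring
    rw [h3, Complex.exp_neg, hexp1, hμinv, inv_pow]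
  -- final identity
  have hfin : (a1 : ℂ) * l * B = (1 + l) * E := by
    have h2 : (a1:ℂ)*l*B*((a1:ℂ)*(l-1)) = (1+l)*E*((a1:ℂ)*(l-1)) := by
      linear_combination (a1:ℂ)^2*l*hBstep - (1+l)*hEstep - c*hl
    exact mul_right_cancel₀ (mul_ne_zero ha1c hl1') h2
  refine ⟨A, D, B, E, fun n hn => ⟨?_, ?_⟩, hfin⟩
  · rw [hexp1, hexp2]; exact βform n hn
  · rw [hexp1, hexp2]; exact γform n hn
end

section
/- Let a_1, a_2 be real numbers with a_1 ≠ 0, a_2 ≠ 0 and a_1² > 4·a_2. Then there exists a unique real number λ with −1 < λ < 1 such that a_1²·λ = a_2·(1+λ)²; moreover this λ is nonzero. -/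
theorem stmt_9 (a1 a2 : ℝ) (ha1 : a1 ≠ 0) (ha2 : a2 ≠ 0) (ha : a1 ^ 2 > 4 * a2) :
    (∃! l : ℝ, -1 < l ∧ l < 1 ∧ a1 ^ 2 * l = a2 * (1 + l) ^ 2) ∧
    (∀ l : ℝ, -1 < l → l < 1 → a1 ^ 2 * l = a2 * (1 + l) ^ 2 → l ≠ 0) := by
  have hA : (0:ℝ) < a1 ^ 2 := by positivity
  have hB2 : (0:ℝ) < a2 ^ 2 := by positivity
  obtain ⟨t, ht⟩ : ∃ t : ℝ, t = a1 ^ 2 / a2 - 2 := ⟨_, rfl⟩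
  have ht2 : t ^ 2 > 4 := by
    have h : t ^ 2 - 4 = a1 ^ 2 * (a1 ^ 2 - 4 * a2) / a2 ^ 2 := by
      subst ht; field_simp; ring
    have hpos : a1 ^ 2 * (a1 ^ 2 - 4 * a2) / a2 ^ 2 > 0 :=
      div_pos (mul_pos hA (by linarith)) hB2
    linarith
  have key : ∀ l : ℝ, a1 ^ 2 * l = a2 * (1 + l) ^ 2 ↔ l ^ 2 - t * l + 1 = 0 := by
    intro l
    have hfac : a2 * (l ^ 2 - t * l + 1) = a2 * (1 + l) ^ 2 - a1 ^ 2 * l := by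
      subst ht; field_simp; ring
    constructor
    · intro h
      have h0 : a2 * (l ^ 2 - t * l + 1) = 0 := by rw [hfac, h]; ring
      rcases mul_eq_zero.mp h0 with h' | h'
      · exact absurd h' ha2
      · exact h'
    · intro h
      have h0 : a2 * (1 + l) ^ 2 - a1 ^ 2 * l = 0 := by rw [← hfac, h, mul_zero]
      linarith
  -- uniqueness of root in (-1,1)
  have uniq : ∀ l l' : ℝ, -1 < l → l < 1 → l ^ 2 - t * l + 1 = 0 →
      -1 < l' → l' < 1 → l' ^ 2 - t * l' + 1 = 0 → l = l' := by
    intro l l' hl1 hl2 hq hl1' hl2' hq'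
    have hprod : (l - l') * (l + l' - t) = 0 := by linear_combination hq - hq'
    rcases mul_eq_zero.mp hprod with h | h
    · linarith
    · have htsum : t = l + l' := by linarith
      have hll : l * l' = 1 := by linear_combination -hq - l * htsum
      nlinarith [sq_nonneg (l - l'),
        mul_pos (by linarith : (0:ℝ) < 1 - l) (by linarith : (0:ℝ) < 1 - l'),
        mul_pos (by linarith : (0:ℝ) < 1 + l) (by linarith : (0:ℝ) < 1 + l')]
  -- existence
  obtain ⟨s, hs⟩ : ∃ s : ℝ, s = Real.sqrt (t ^ 2 - 4) := ⟨_, rfl⟩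
  have hsnn : 0 ≤ s := hs ▸ Real.sqrt_nonneg _
  have hs2 : s ^ 2 = t ^ 2 - 4 := by rw [hs]; exact Real.sq_sqrt (by linarith)
  have hex : ∃ l : ℝ, -1 < l ∧ l < 1 ∧ l ^ 2 - t * l + 1 = 0 := by
    rcases lt_or_ge 0 t with htpos | htneg
    · have ht2' : t > 2 := by nlinarith
      have hst : s < t := by nlinarith [hs2, hsnn]
      have hst2 : t - 2 < s := by nlinarith [hs2, hsnn]
      exact ⟨(t - s) / 2, by linarith, by linarith, by linear_combination (1/4 : ℝ) * hs2⟩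
    · have ht2' : t < -2 := by nlinarith
      have hst : -t > s := by nlinarith [hs2, hsnn]
      have hst2 : -t - 2 < s := by nlinarith [hs2, hsnn]
      exact ⟨(t + s) / 2, by linarith, by linarith, by linear_combination (1/4 : ℝ) * hs2⟩
  obtain ⟨l, hl1, hl2, hlq⟩ := hex
  constructor
  · refine ⟨l, ⟨hl1, hl2, (key l).mpr hlq⟩, ?_⟩
    rintro y ⟨hy1, hy2, hyq⟩
    exact uniq y l hy1 hy2 ((key y).mp hyq) hl1 hl2 hlq
  · intro x hx1 hx2 hxq hx0
    have h0 := (key x).mp hxq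
    rw [hx0] at h0
    norm_num at h0
end

section
/- Let a_1, a_2 be real numbers with a_1 ≠ 0 and a_2 ≠ 0, and let (β_n)_{n≥0} and (γ_n)_{n≥1} be sequences of real numbers such that for all n ≥ 4: a_1·(γ_{n−2} − γ_{n−1}) = a_2·(β_{n−2} − β_n) and γ_n − γ_{n−2} = a_1·(β_n − β_{n−1}). Then both sequences satisfy, for all n ≥ 5, the linear difference equation y_n + (1 − a_1²/a_2)·y_{n−1} − (1 − a_1²/a_2)·y_{n−2} − y_{n−3} = 0; that is, β_n + (1 − a_1²/a_2)·β_{n−1} − (1 − a_1²/a_2)·β_{n−2} − β_{n−3} = 0 and γ_n + (1 − a_1²/a_2)·γ_{n−1} − (1 − a_1²/a_2)·γ_{n−2} − γ_{n−3} = 0 for all n ≥ 5. -/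
theorem stmt_11 (a1 a2 : ℝ) (ha1 : a1 ≠ 0) (ha2 : a2 ≠ 0) (β γ : ℕ → ℝ)
    (h1 : ∀ n, 4 ≤ n → a1 * (γ (n - 2) - γ (n - 1)) = a2 * (β (n - 2) - β n))
    (h2 : ∀ n, 4 ≤ n → γ n - γ (n - 2) = a1 * (β n - β (n - 1))) :
    ∀ n, 5 ≤ n →
      β n + (1 - a1 ^ 2 / a2) * β (n - 1) - (1 - a1 ^ 2 / a2) * β (n - 2) - β (n - 3) = 0 ∧
      γ n + (1 - a1 ^ 2 / a2) * γ (n - 1) - (1 - a1 ^ 2 / a2) * γ (n - 2) - γ (n - 3) = 0 := by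
  intro n hn
  obtain ⟨m, rfl⟩ := Nat.exists_eq_add_of_le hn
  have e1 := h1 (5 + m) (by omega)
  have e1' := h1 (4 + m) (by omega)
  have e2 := h2 (5 + m) (by omega)
  have e2' := h2 (4 + m) (by omega)
  have i1 : 5 + m - 1 = 4 + m := by omega
  have i2 : 5 + m - 2 = 3 + m := by omega
  have i3 : 5 + m - 3 = 2 + m := by omega
  have i4 : 4 + m - 1 = 3 + m := by omega
  have i5 : 4 + m - 2 = 2 + m := by omega
  rw [i2, i1] at e1 e2
  rw [i5, i4] at e1' e2'
  rw [i1, i2, i3]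
  constructor
  · field_simp
    linear_combination e1 + e1' + a1 * e2'
  · field_simp
    linear_combination a2 * e2 + a2 * e2' + a1 * e1
end

section
/- Let a_1, a_2 be real numbers with a_1 ≠ 0, a_2 ≠ 0, and let λ be a nonzero real number with −1 < λ < 1 and a_1²·λ = a_2·(1+λ)². Let A, B, C, D, E, F be real numbers with a_1·C = (1+λ)·F and a_1·λ·B = (1+λ)·E, and let (β_n) and (γ_n) be real sequences with β_n = A + B·λⁿ + C·λ⁻ⁿ and γ_n = D + E·λⁿ + F·λ⁻ⁿ for all n ≥ 2. Then for all n ≥ 4: a_1·(γ_{n−2} − γ_{n−1}) = a_2·(β_{n−2} − β_n) and γ_n − γ_{n−2} = a_1·(β_n − β_{n−1}). -/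
theorem stmt_13 (a1 a2 l : ℝ) (ha1 : a1 ≠ 0) (ha2 : a2 ≠ 0)
    (hl0 : l ≠ 0) (hl1 : -1 < l) (hl2 : l < 1)
    (hl : a1 ^ 2 * l = a2 * (1 + l) ^ 2)
    (A B C D E F : ℝ) (hCF : a1 * C = (1 + l) * F) (hBE : a1 * l * B = (1 + l) * E)
    (β γ : ℕ → ℝ)
    (hβ : ∀ n : ℕ, 2 ≤ n → β n = A + B * l ^ n + C * (l ^ n)⁻¹)
    (hγ : ∀ n : ℕ, 2 ≤ n → γ n = D + E * l ^ n + F * (l ^ n)⁻¹) :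
    ∀ n, 4 ≤ n →
      a1 * (γ (n - 2) - γ (n - 1)) = a2 * (β (n - 2) - β n) ∧
      γ n - γ (n - 2) = a1 * (β n - β (n - 1)) := by
  intro n hn
  obtain ⟨m, rfl⟩ := Nat.exists_eq_add_of_le hn
  have h2 : 4 + m - 2 = m + 2 := by omega
  have h3 : 4 + m - 1 = m + 3 := by omega
  have h4 : 4 + m = m + 4 := by omega
  rw [h2, h3, h4]
  have hx : l ^ m ≠ 0 := pow_ne_zero _ hl0
  rw [hβ (m+2) (by omega), hβ (m+3) (by omega), hβ (m+4) (by omega),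
      hγ (m+2) (by omega), hγ (m+3) (by omega), hγ (m+4) (by omega)]
  have h1l : (1 : ℝ) + l ≠ 0 := by intro h; nlinarith
  have hF : F = a1 * C / (1 + l) := by field_simp; linarith
  have hE : E = a1 * l * B / (1 + l) := by field_simp; linarith
  have ha2' : a2 = a1 ^ 2 * l / (1 + l) ^ 2 := by
    field_simp; linarith
  constructor <;>
  · simp only [hF, hE, ha2', pow_add]
    field_simp
    ring
end

section
/- Let a_1, a_2 be real numbers with a_1 ≠ 0, let θ ∈ (0,π) and set λ = e^{iθ} ∈ ℂ, and assume (a_1² : ℂ)·λ = (a_2 : ℂ)·(1+λ)². Let A, D be real numbers and B, E complex numbers with a_1·λ·B = (1+λ)·E, and let (β_n) and (γ_n) be real sequences such that (β_n : ℂ) = A + B·λⁿ + conj(B)·λ̄ⁿ and (γ_n : ℂ) = D + E·λⁿ + conj(E)·λ̄ⁿ for all n ≥ 2, where λ̄ = conj(λ). Then for all n ≥ 4: a_1·(γ_{n−2} − γ_{n−1}) = a_2·(β_{n−2} − β_n) and γ_n − γ_{n−2} = a_1·(β_n − β_{n−1}). -/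
theorem stmt_14 (a1 a2 θ : ℝ) (ha1 : a1 ≠ 0) (hθ1 : 0 < θ) (hθ2 : θ < Real.pi)
    (l : ℂ) (hlθ : l = Complex.exp (θ * Complex.I))
    (hl : (a1 ^ 2 : ℂ) * l = (a2 : ℂ) * (1 + l) ^ 2)
    (A D : ℝ) (B E : ℂ) (hBE : (a1 : ℂ) * l * B = (1 + l) * E)
    (β γ : ℕ → ℝ)
    (hβ : ∀ n : ℕ, 2 ≤ n →
      (β n : ℂ) = (A : ℂ) + B * l ^ n + (starRingEnd ℂ) B * ((starRingEnd ℂ) l) ^ n)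
    (hγ : ∀ n : ℕ, 2 ≤ n →
      (γ n : ℂ) = (D : ℂ) + E * l ^ n + (starRingEnd ℂ) E * ((starRingEnd ℂ) l) ^ n) :
    ∀ n, 4 ≤ n →
      a1 * (γ (n - 2) - γ (n - 1)) = a2 * (β (n - 2) - β n) ∧
      γ n - γ (n - 2) = a1 * (β n - β (n - 1)) := by
  have hlne : (1 + l) ≠ 0 := by
    intro h
    have hlm : l = -1 := by linear_combination h
    have him : l.im = Real.sin θ := by
      rw [hlθ]; simpa using Complex.exp_ofReal_mul_I_im θ
    rw [hlm] at him
    simp at him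
    have := Real.sin_pos_of_pos_of_lt_pi hθ1 hθ2
    linarith
  have hlne' : (1 + (starRingEnd ℂ) l) ≠ 0 := by
    intro h
    apply hlne
    have := congrArg (starRingEnd ℂ) h
    simpa using this
  have hBE' : (a1 : ℂ) * (starRingEnd ℂ) l * (starRingEnd ℂ) B
      = (1 + (starRingEnd ℂ) l) * (starRingEnd ℂ) E := by
    have := congrArg (starRingEnd ℂ) hBE
    simpa [map_mul, map_add] using this
  have hl' : (a1 ^ 2 : ℂ) * (starRingEnd ℂ) l = (a2 : ℂ) * (1 + (starRingEnd ℂ) l) ^ 2 := by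
    have := congrArg (starRingEnd ℂ) hl
    simpa [map_mul, map_add, map_pow] using this
  have hE1 : (a1 : ℂ) * E = a2 * (1 + l) * B := by
    apply mul_left_cancel₀ hlne
    linear_combination (-(a1 : ℂ)) * hBE + B * hl
  have hE1' : (a1 : ℂ) * (starRingEnd ℂ) E
      = a2 * (1 + (starRingEnd ℂ) l) * (starRingEnd ℂ) B := by
    apply mul_left_cancel₀ hlne'
    linear_combination (-(a1 : ℂ)) * hBE' + (starRingEnd ℂ) B * hl'
  intro n hn
  obtain ⟨m, rfl⟩ : ∃ m, n = m + 4 := ⟨n - 4, by omega⟩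
  have e2 : m + 4 - 2 = m + 2 := by omega
  have e1 : m + 4 - 1 = m + 3 := by omega
  rw [e2, e1]
  constructor
  · have key : ((a1 * (γ (m+2) - γ (m+3)) : ℝ) : ℂ) = ((a2 * (β (m+2) - β (m+4)) : ℝ) : ℂ) := by
      push_cast
      rw [hγ (m+2) (by omega), hγ (m+3) (by omega), hβ (m+2) (by omega), hβ (m+4) (by omega)]
      linear_combination (l ^ (m+2) - l ^ (m+3)) * hE1
        + ((starRingEnd ℂ) l ^ (m+2) - (starRingEnd ℂ) l ^ (m+3)) * hE1'
    exact_mod_cast key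
  · have key : ((γ (m+4) - γ (m+2) : ℝ) : ℂ) = ((a1 * (β (m+4) - β (m+3)) : ℝ) : ℂ) := by
      push_cast
      rw [hγ (m+4) (by omega), hγ (m+2) (by omega), hβ (m+4) (by omega), hβ (m+3) (by omega)]
      linear_combination (l ^ (m+2) - l ^ (m+3)) * hBE
        + ((starRingEnd ℂ) l ^ (m+2) - (starRingEnd ℂ) l ^ (m+3)) * hBE'
    exact_mod_cast key
end

section
/- Let {P_n}_{n≥0} be a sequence of monic real polynomials with P_0 = 1, P_1(x) = x − β_0 and x·P_n(x) = P_{n+1}(x) + β_n·P_n(x) + γ_n·P_{n−1}(x) for all n ≥ 1, with γ_n ≠ 0 for all n ≥ 1. Let a_1 be a nonzero real number and {Q_n}_{n≥0} monic polynomials with deg Q_n = n such that Q_n = P_n + a_1·P_{n−1} for all n ≥ 2. If {Q_n} satisfies a three-term recurrence x·Q_n(x) = Q_{n+1}(x) + β̃_n·Q_n(x) + γ̃_n·Q_{n−1}(x) for all n ≥ 1 with γ̃_n ≠ 0, then γ_2 + a_1·(β_1 − β_2) ≠ 0 and γ_n − γ_2 = a_1·(β_n − β_2) for all n ≥ 3.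 -/
open Polynomial

private lemma aux_extract3 (p q r : Polynomial ℝ) (a b c : ℝ) (i j k : ℕ)
    (hij : j < i) (hjk : k < j)
    (hpm : p.Monic) (hqm : q.Monic) (hrm : r.Monic)
    (hpd : p.natDegree = i) (hqd : q.natDegree = j) (hrd : r.natDegree = k)
    (h : C a * p + C b * q + C c * r = 0) : a = 0 ∧ b = 0 ∧ c = 0 := by
  have hp1 : p.coeff i = 1 := by rw [← hpd]; exact hpm.coeff_natDegree
  have hq1 : q.coeff j = 1 := by rw [← hqd]; exact hqm.coeff_natDegree
  have hr1 : r.coeff k = 1 := by rw [← hrd]; exact hrm.coeff_natDegree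
  have hqi : q.coeff i = 0 := coeff_eq_zero_of_natDegree_lt (by rw [hqd]; exact hij)
  have hri : r.coeff i = 0 := coeff_eq_zero_of_natDegree_lt (by rw [hrd]; exact hjk.trans hij)
  have hrj : r.coeff j = 0 := coeff_eq_zero_of_natDegree_lt (by rw [hrd]; exact hjk)
  have ha : a = 0 := by
    have h2 := congrArg (fun f : Polynomial ℝ => f.coeff i) h
    simp only [coeff_add, coeff_C_mul, hp1, hqi, hri, mul_one, mul_zero, add_zero,
      coeff_zero] at h2
    exact h2
  have hb : b = 0 := by
    have h2 := congrArg (fun f : Polynomial ℝ => f.coeff j) h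
    simp only [coeff_add, coeff_C_mul, ha, zero_mul, zero_add, hq1, hrj, mul_one, mul_zero,
      add_zero, coeff_zero] at h2
    exact h2
  have hc : c = 0 := by
    have h2 := congrArg (fun f : Polynomial ℝ => f.coeff k) h
    simp only [coeff_add, coeff_C_mul, ha, hb, zero_mul, zero_add, hr1, mul_one,
      coeff_zero] at h2
    exact h2
  exact ⟨ha, hb, hc⟩

theorem stmt_15 (P Q : ℕ → Polynomial ℝ) (β γ βt γt : ℕ → ℝ) (a1 : ℝ) (ha1 : a1 ≠ 0)
    (hPmonic : ∀ n, (P n).Monic)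
    (hP0 : P 0 = 1) (hP1 : P 1 = X - C (β 0))
    (hPrec : ∀ n, 1 ≤ n → X * P n = P (n + 1) + C (β n) * P n + C (γ n) * P (n - 1))
    (hγ : ∀ n, 1 ≤ n → γ n ≠ 0)
    (hQmonic : ∀ n, (Q n).Monic) (hQdeg : ∀ n, (Q n).natDegree = n)
    (hQ : ∀ n, 2 ≤ n → Q n = P n + C a1 * P (n - 1))
    (hQrec : ∀ n, 1 ≤ n → X * Q n = Q (n + 1) + C (βt n) * Q n + C (γt n) * Q (n - 1))
    (hγt : ∀ n, 1 ≤ n → γt n ≠ 0) :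
    γ 2 + a1 * (β 1 - β 2) ≠ 0 ∧ ∀ n, 3 ≤ n → γ n - γ 2 = a1 * (β n - β 2) := by
  -- degrees of P
  have degP : ∀ n, (P n).natDegree = n := by
    have key : ∀ n, (P n).natDegree = n ∧ (P (n + 1)).natDegree = n + 1 := by
      intro n
      induction n with
      | zero =>
        constructor
        · rw [hP0]; simp
        · rw [hP1]; exact natDegree_X_sub_C _
      | succ k ih =>
        refine ⟨ih.2, ?_⟩
        have h := hPrec (k + 1) (by omega)
        simp only [Nat.add_sub_cancel] at h
        have hp2 : P (k + 1 + 1) =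
            X * P (k + 1) - (C (β (k + 1)) * P (k + 1) + C (γ (k + 1)) * P k) := by
          linear_combination -h
        have hd1 : (X * P (k + 1)).natDegree = k + 2 := by
          rw [mul_comm, natDegree_mul_X (hPmonic (k + 1)).ne_zero, ih.2]
        rw [hp2, natDegree_sub_eq_left_of_natDegree_lt, hd1]
        rw [hd1]
        have hle : (C (β (k + 1)) * P (k + 1) + C (γ (k + 1)) * P k).natDegree ≤ k + 1 := by
          apply (natDegree_add_le _ _).trans
          apply max_le
          · exact (natDegree_C_mul_le _ _).trans (by rw [ih.2])
          · exact (natDegree_C_mul_le _ _).trans (by rw [ih.1]; omega)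
        omega
    exact fun n => (key n).1
  -- key step for n ≥ 3
  have key : ∀ m : ℕ, γ (m + 3) - γ (m + 2) = a1 * (β (m + 3) - β (m + 2)) := by
    intro m
    have e1 := hPrec (m + 3) (by omega)
    have e2 := hPrec (m + 2) (by omega)
    have e3 := hQrec (m + 3) (by omega)
    have q1 := hQ (m + 2) (by omega)
    have q2 := hQ (m + 3) (by omega)
    have q3 := hQ (m + 4) (by omega)
    simp only [show m + 3 - 1 = m + 2 by omega, show m + 3 + 1 = m + 4 by omega,
      show m + 2 - 1 = m + 1 by omega, show m + 2 + 1 = m + 3 by omega,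
      show m + 4 - 1 = m + 3 by omega] at e1 e2 e3 q1 q2 q3
    have E : C (β (m + 3) - βt (m + 3)) * P (m + 3)
        + C (γ (m + 3) + a1 * β (m + 2) - a1 * βt (m + 3) - γt (m + 3)) * P (m + 2)
        + C (a1 * γ (m + 2) - a1 * γt (m + 3)) * P (m + 1) = 0 := by
      simp only [map_add, map_sub, map_mul]
      linear_combination (-1 : Polynomial ℝ) * e1 - C a1 * e2 + e3
        + (C (βt (m + 3)) - X) * q2 + q3 + C (γt (m + 3)) * q1
    obtain ⟨ha, hb, hc⟩ := aux_extract3 (P (m + 3)) (P (m + 2)) (P (m + 1)) _ _ _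
      (m + 3) (m + 2) (m + 1) (by omega) (by omega)
      (hPmonic _) (hPmonic _) (hPmonic _) (degP _) (degP _) (degP _) E
    have hγt2 : γt (m + 3) = γ (m + 2) := by
      have h0 : a1 * (γ (m + 2) - γt (m + 3)) = 0 := by linear_combination hc
      rcases mul_eq_zero.1 h0 with h | h
      · exact absurd h ha1
      · linarith
    linear_combination hb - a1 * ha + hγt2
  constructor
  · -- first part
    have e1 := hPrec 2 (by omega)
    have e2 := hPrec 1 (by omega)
    have e3 := hQrec 2 (by omega)
    have q2 := hQ 2 (by omega)
    have q3 := hQ 3 (by omega)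
    simp only [show (2:ℕ) - 1 = 1 by omega, show (2:ℕ) + 1 = 3 by omega,
      show (1:ℕ) - 1 = 0 by omega, show (1:ℕ) + 1 = 2 by omega,
      show (3:ℕ) - 1 = 2 by omega] at e1 e2 e3 q2 q3
    have E : C (β 2 - βt 2) * P 2 + C (γ 2 + a1 * β 1 - a1 * βt 2) * P 1 + C (a1 * γ 1) * P 0
        = C (γt 2) * Q 1 := by
      simp only [map_add, map_sub, map_mul]
      linear_combination (-1 : Polynomial ℝ) * e1 - C a1 * e2 + e3
        + (C (βt 2) - X) * q2 + q3
    have h1 : (P 2).coeff 2 = 1 := by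
      have := (hPmonic 2).coeff_natDegree; rwa [degP 2] at this
    have h2 : (P 1).coeff 2 = 0 := coeff_eq_zero_of_natDegree_lt (by rw [degP 1]; omega)
    have h3 : (P 0).coeff 2 = 0 := coeff_eq_zero_of_natDegree_lt (by rw [degP 0]; omega)
    have h4 : (Q 1).coeff 2 = 0 := coeff_eq_zero_of_natDegree_lt (by rw [hQdeg 1]; omega)
    have ha : β 2 - βt 2 = 0 := by
      have hh := congrArg (fun f : Polynomial ℝ => f.coeff 2) E
      simp only [coeff_add, coeff_C_mul, h1, h2, h3, h4, mul_one, mul_zero, add_zero] at hh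
      exact hh
    have h5 : (P 1).coeff 1 = 1 := by
      have := (hPmonic 1).coeff_natDegree; rwa [degP 1] at this
    have h6 : (P 0).coeff 1 = 0 := coeff_eq_zero_of_natDegree_lt (by rw [degP 0]; omega)
    have h7 : (Q 1).coeff 1 = 1 := by
      have := (hQmonic 1).coeff_natDegree; rwa [hQdeg 1] at this
    have hb : γ 2 + a1 * β 1 - a1 * βt 2 = γt 2 := by
      have hh := congrArg (fun f : Polynomial ℝ => f.coeff 1) E
      simp only [coeff_add, coeff_C_mul, ha, map_zero, zero_mul, coeff_zero, zero_add,
        h5, h6, h7, mul_one, mul_zero, add_zero] at hh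
      exact hh
    have hfin : γ 2 + a1 * (β 1 - β 2) = γt 2 := by linear_combination hb - a1 * ha
    rw [hfin]
    exact hγt 2 (by omega)
  · -- second part: telescoping
    have tele : ∀ m : ℕ, γ (m + 3) - γ 2 = a1 * (β (m + 3) - β 2) := by
      intro m
      induction m with
      | zero => simpa using key 0
      | succ k ih =>
        have h := key (k + 1)
        rw [show k + 1 + 3 = k + 4 by omega, show k + 1 + 2 = k + 3 by omega] at h
        rw [show k + 1 + 3 = k + 4 by omega]
        linear_combination h + ih
    intro n hn
    obtain ⟨m, rfl⟩ := Nat.exists_eq_add_of_le hn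
    rw [show 3 + m = m + 3 by omega]
    exact tele m
end

section
/- Let {P_n}_{n≥0} be a sequence of monic real polynomials with P_0 = 1, P_1(x) = x − β_0 and x·P_n(x) = P_{n+1}(x) + β_n·P_n(x) + γ_n·P_{n−1}(x) for all n ≥ 1, with γ_n ≠ 0 for all n ≥ 1. Let a_1 be a nonzero real number and assume γ_n − γ_2 = a_1·(β_n − β_2) for all n ≥ 3. Set Q_m = P_m + a_1·P_{m−1} for m ≥ 2. Then for every n ≥ 3: x·Q_n(x) = Q_{n+1}(x) + β_n·Q_n(x) + γ_{n−1}·Q_{n−1}(x), and the coefficient γ_{n−1} is nonzero. -/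
open Polynomial

theorem stmt_16 (P Q : ℕ → Polynomial ℝ) (β γ : ℕ → ℝ) (a1 : ℝ) (ha1 : a1 ≠ 0)
    (hPmonic : ∀ n, (P n).Monic)
    (hP0 : P 0 = 1) (hP1 : P 1 = X - C (β 0))
    (hPrec : ∀ n, 1 ≤ n → X * P n = P (n + 1) + C (β n) * P n + C (γ n) * P (n - 1))
    (hγ : ∀ n, 1 ≤ n → γ n ≠ 0)
    (hcond : ∀ n, 3 ≤ n → γ n - γ 2 = a1 * (β n - β 2))
    (hQ : ∀ m, 2 ≤ m → Q m = P m + C a1 * P (m - 1)) :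
    ∀ n, 3 ≤ n →
      X * Q n = Q (n + 1) + C (β n) * Q n + C (γ (n - 1)) * Q (n - 1) ∧ γ (n - 1) ≠ 0 := by
  intro n hn
  obtain ⟨m, rfl⟩ : ∃ m, n = m + 3 := ⟨n - 3, by omega⟩
  have hA := hPrec (m + 3) (by omega)
  have hB := hPrec (m + 2) (by omega)
  have hQ4 := hQ (m + 4) (by omega)
  have hQ3 := hQ (m + 3) (by omega)
  have hQ2 := hQ (m + 2) (by omega)
  simp only [Nat.add_sub_cancel, show m + 3 - 1 = m + 2 from rfl,
    show m + 4 - 1 = m + 3 from rfl, show m + 2 - 1 = m + 1 from rfl] at *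
  refine ⟨?_, hγ (m + 2) (by omega)⟩
  have h1 := hcond (m + 3) (by omega)
  have h2 : γ (m + 2) - γ 2 = a1 * (β (m + 2) - β 2) := by
    rcases m with _ | m
    · ring
    · exact hcond _ (by omega)
  have hC : (C (γ (m + 3)) : Polynomial ℝ)
      = C (γ (m + 2)) + C a1 * C (β (m + 3)) - C a1 * C (β (m + 2)) := by
    rw [← C_mul, ← C_mul, ← C_add, ← C_sub]
    congr 1
    linarith
  rw [hQ4, hQ3, hQ2]
  linear_combination hA + C a1 * hB + hC * P (m + 2)
end

section
/- Let {P_n}_{n≥0} be a sequence of monic real polynomials with P_0 = 1, P_1(x) = x and x·P_n(x) = P_{n+1}(x) + γ_n·P_{n−1}(x) for all n ≥ 1 (i.e., a symmetric monic orthogonal polynomial sequence, with all β_n = 0), with γ_n ≠ 0 for all n ≥ 1. Let a_1 be a nonzero real number and {Q_n}_{n≥0} monic polynomials with deg Q_n = n such that Q_n = P_n + a_1·P_{n−1} for all n ≥ 2. If {Q_n} satisfies a three-term recurrence x·Q_n(x) = Q_{n+1}(x) + β̃_n·Q_n(x) + γ̃_n·Q_{n−1}(x) for all n ≥ 1 with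 γ̃_n ≠ 0, then γ_n = γ_2 for all n ≥ 2. -/
open Polynomial

theorem stmt_17 (P Q : ℕ → Polynomial ℝ) (γ βt γt : ℕ → ℝ) (a1 : ℝ) (ha1 : a1 ≠ 0)
    (hPmonic : ∀ n, (P n).Monic)
    (hP0 : P 0 = 1) (hP1 : P 1 = X)
    (hPrec : ∀ n, 1 ≤ n → X * P n = P (n + 1) + C (γ n) * P (n - 1))
    (hγ : ∀ n, 1 ≤ n → γ n ≠ 0)
    (hQmonic : ∀ n, (Q n).Monic) (hQdeg : ∀ n, (Q n).natDegree = n)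
    (hQ : ∀ n, 2 ≤ n → Q n = P n + C a1 * P (n - 1))
    (hQrec : ∀ n, 1 ≤ n → X * Q n = Q (n + 1) + C (βt n) * Q n + C (γt n) * Q (n - 1))
    (hγt : ∀ n, 1 ≤ n → γt n ≠ 0) :
    ∀ n, 2 ≤ n → γ n = γ 2 := by
  -- degrees of P
  have hdeg : ∀ n, (P n).natDegree = n := by
    have key : ∀ n, (P n).natDegree = n ∧ (P (n+1)).natDegree = n+1 := by
      intro n
      induction n with
      | zero => constructor <;> simp [hP0, hP1]
      | succ k ih =>
        refine ⟨ih.2, ?_⟩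
        have hrec := hPrec (k+1) (by omega)
        have hPk2 : P (k+2) = X * P (k+1) - C (γ (k+1)) * P k := by
          have : (k+1) - 1 = k := by omega
          rw [this] at hrec
          linear_combination -hrec
        rw [hPk2]
        have h1 : (X * P (k+1)).natDegree = k + 2 := by
          rw [natDegree_X_mul (hPmonic (k+1)).ne_zero, ih.2]
        have h2 : (C (γ (k+1)) * P k).natDegree < k + 2 := by
          calc (C (γ (k+1)) * P k).natDegree ≤ (P k).natDegree := natDegree_C_mul_le _ _
          _ < k + 2 := by rw [ih.1]; omega
        rw [natDegree_sub_eq_left_of_natDegree_lt (by rw [h1]; exact h2), h1]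
    exact fun n => (key n).1
  have hcz : ∀ i j : ℕ, i < j → (P i).coeff j = 0 := by
    intro i j h
    exact coeff_eq_zero_of_natDegree_lt (by rw [hdeg i]; exact h)
  have hc1 : ∀ i, (P i).coeff i = 1 := by
    intro i
    have := (hPmonic i).coeff_natDegree
    rwa [hdeg i] at this
  -- key step : γ (m+3) = γ (m+2)
  have key : ∀ m : ℕ, γ (m+3) = γ (m+2) := by
    intro m
    have e1 := hQrec (m+3) (by omega)
    have h31 : (m+3) - 1 = m+2 := by omega
    have h41 : (m+4) - 1 = m+3 := by omega
    have h21 : (m+2) - 1 = m+1 := by omega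
    rw [h31] at e1
    rw [hQ (m+4) (by omega), hQ (m+3) (by omega), hQ (m+2) (by omega), h41, h31, h21] at e1
    have e5 := hPrec (m+3) (by omega)
    rw [h31] at e5
    have e6 := hPrec (m+2) (by omega)
    rw [h21] at e6
    have hE : C (βt (m+3)) * P (m+3)
        + (C (βt (m+3)) * C a1 + C (γt (m+3)) - C (γ (m+3))) * P (m+2)
        + (C a1 * C (γt (m+3)) - C a1 * C (γ (m+2))) * P (m+1) = 0 := by
      linear_combination -e1 + e5 + C a1 * e6
    have eA := congrArg (fun p => coeff p (m+3)) hE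
    have eB := congrArg (fun p => coeff p (m+2)) hE
    have eC := congrArg (fun p => coeff p (m+1)) hE
    simp only [coeff_add, coeff_sub, coeff_mul_C, coeff_C_mul, mul_assoc, coeff_zero,
      sub_mul, add_mul, coeff_smul] at eA eB eC
    rw [hc1 (m+3), hcz (m+2) (m+3) (by omega), hcz (m+1) (m+3) (by omega)] at eA
    rw [hc1 (m+2), hcz (m+1) (m+2) (by omega)] at eB
    rw [hc1 (m+1)] at eC
    have hb : βt (m+3) = 0 := by simpa using eA
    rw [hb] at eB eC
    have hg : γt (m+3) = γ (m+3) := by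
      simp at eB
      linarith
    rw [hg] at eC
    simp only [zero_mul, mul_zero, zero_add, add_zero, mul_one, zero_sub, sub_zero] at eC
    have h : a1 * (γ (m+3) - γ (m+2)) = 0 := by linarith
    have h2 := (mul_eq_zero.mp h).resolve_left ha1
    linarith
  intro n hn
  induction n with
  | zero => omega
  | succ k ih =>
    rcases Nat.lt_or_ge k 2 with hk | hk
    · interval_cases k
      · omega
      · rfl
    · have hk3 : ∃ m, k + 1 = m + 3 := ⟨k - 2, by omega⟩
      obtain ⟨m, hm⟩ := hk3
      rw [hm, key m, show m + 2 = k from by omega]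
      exact ih (by omega)
end
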